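/- arXiv:2605.30464 — 7 statements merged into one kernel-verified Lean document; each statement's English description precedes it below -/
import Mathlib

section
/- Let K ≥ 1, let 𝒲 ⊂ ℝ^K be a compact set with B := sup_{w ∈ 𝒲} ‖w‖, let W and W' be Borel probability measures on ℝ^K supported in 𝒲, and let R and R' be Borel probability measures on ℝ^K with finite first moments; set m₁(R) := ∫ ‖r‖ dR(r). Then W₁(Y_{W,R}, Y_{W',R'}) ≤ m₁(R) · W₁(W, W') + B · W₁(R, R'). -/
open MeasureTheory ENNReal

noncomputable section

/-- A coupling of two measures: a measure on the product whose marginals are the given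
measures. -/
def IsCoupling {X Y : Type*} [MeasurableSpace X] [MeasurableSpace Y]
    (π : Measure (X × Y)) (μ : Measure X) (ν : Measure Y) : Prop :=
  π.map Prod.fst = μ ∧ π.map Prod.snd = ν

/-- The 1-Wasserstein distance (as an extended nonnegative real): the infimum over
couplings of the integral of the distance. -/
noncomputable def W1 {X : Type*} [MeasurableSpace X] [PseudoEMetricSpace X]
    (μ ν : Measure X) : ℝ≥0∞ :=
  ⨅ (π : Measure (X × X)) (_ : IsCoupling π μ ν), ∫⁻ p, edist p.1 p.2 ∂π

/-- The induced portfolio-outcome law `Y_{W,R}`: pushforward of `W ⊗ R` under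
`(w, r) ↦ ⟨r, w⟩`. -/
noncomputable def outcomeLaw {K : ℕ} (W R : Measure (EuclideanSpace ℝ (Fin K))) :
    Measure ℝ :=
  (W.prod R).map (fun p => (inner ℝ p.2 p.1 : ℝ))

section Aux

variable {K : ℕ}

local notation "E" => EuclideanSpace ℝ (Fin K)

lemma coupling_prob {X : Type*} [MeasurableSpace X] {π : Measure (X × X)} {μ ν : Measure X}
    [IsProbabilityMeasure μ] (h : IsCoupling π μ ν) : IsProbabilityMeasure π := by
  constructor
  have h1 : π.map Prod.fst Set.univ = 1 := by rw [h.1]; exact measure_univ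
  rwa [Measure.map_apply measurable_fst MeasurableSet.univ, Set.preimage_univ] at h1

lemma key_estimate (𝒲 : Set E) (hmeas : MeasurableSet 𝒲)
    (B : ℝ) (hBbound : ∀ w ∈ 𝒲, ‖w‖ ≤ B)
    (W W' R R' : Measure E)
    [IsProbabilityMeasure W] [IsProbabilityMeasure W']
    [IsProbabilityMeasure R] [IsProbabilityMeasure R']
    (hW'supp : W' 𝒲ᶜ = 0)
    (π σ : Measure (E × E)) (hπ : IsCoupling π W W') (hσ : IsCoupling σ R R') :
    W1 (outcomeLaw W R) (outcomeLaw W' R')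
      ≤ (∫⁻ r, (‖r‖₊ : ℝ≥0∞) ∂ R) * (∫⁻ p, edist p.1 p.2 ∂π)
        + ENNReal.ofReal B * (∫⁻ p, edist p.1 p.2 ∂σ) := by
  haveI : IsProbabilityMeasure π := coupling_prob hπ
  haveI : IsProbabilityMeasure σ := coupling_prob hσ
  set f : (E × E) × (E × E) → ℝ × ℝ :=
    fun q => ((inner ℝ q.2.1 q.1.1 : ℝ), (inner ℝ q.2.2 q.1.2 : ℝ)) with hf
  have hm1 : Measurable fun q : (E × E) × (E × E) => (inner ℝ q.2.1 q.1.1 : ℝ) :=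
    (measurable_snd.fst).inner (measurable_fst.fst)
  have hm2 : Measurable fun q : (E × E) × (E × E) => (inner ℝ q.2.2 q.1.2 : ℝ) :=
    (measurable_snd.snd).inner (measurable_fst.snd)
  have hfm : Measurable f := hm1.prodMk hm2
  set τ : Measure (ℝ × ℝ) := (π.prod σ).map f with hτ
  have hcoup : IsCoupling τ (outcomeLaw W R) (outcomeLaw W' R') := by
    constructor
    · rw [hτ, Measure.map_map measurable_fst hfm, outcomeLaw, ← hπ.1, ← hσ.1,
        Measure.map_prod_map _ _ measurable_fst measurable_fst,
        Measure.map_map (show Measurable fun p : E × E => (inner ℝ p.2 p.1 : ℝ) from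
          measurable_snd.inner measurable_fst)
          (measurable_fst.prodMap measurable_fst)]
      rfl
    · rw [hτ, Measure.map_map measurable_snd hfm, outcomeLaw, ← hπ.2, ← hσ.2,
        Measure.map_prod_map _ _ measurable_snd measurable_snd,
        Measure.map_map (show Measurable fun p : E × E => (inner ℝ p.2 p.1 : ℝ) from
          measurable_snd.inner measurable_fst)
          (measurable_snd.prodMap measurable_snd)]
      rfl
  refine le_trans (iInf₂_le τ hcoup) ?_
  rw [hτ, lintegral_map measurable_edist hfm]
  have hpt : ∀ q : (E × E) × (E × E),
      edist (f q).1 (f q).2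
        ≤ edist q.1.1 q.1.2 * (‖q.2.1‖₊ : ℝ≥0∞) + (‖q.1.2‖₊ : ℝ≥0∞) * edist q.2.1 q.2.2 := by
    rintro ⟨⟨w, w'⟩, r, r'⟩
    simp only [hf, edist_eq_enorm_sub, enorm_eq_nnnorm]
    have hdec : (inner ℝ r w : ℝ) - inner ℝ r' w' = inner ℝ r (w - w') + inner ℝ (r - r') w' := by
      rw [inner_sub_right, inner_sub_left]; ring
    calc (‖(inner ℝ r w : ℝ) - inner ℝ r' w'‖₊ : ℝ≥0∞)
        ≤ (‖(inner ℝ r (w - w') : ℝ)‖₊ : ℝ≥0∞) + (‖(inner ℝ (r - r') w' : ℝ)‖₊ : ℝ≥0∞) := by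
          rw [hdec]; exact_mod_cast nnnorm_add_le _ _
      _ ≤ (‖r‖₊ : ℝ≥0∞) * (‖w - w'‖₊ : ℝ≥0∞) + (‖r - r'‖₊ : ℝ≥0∞) * (‖w'‖₊ : ℝ≥0∞) := by
          gcongr <;> exact_mod_cast nnnorm_inner_le_nnnorm _ _
      _ = (‖w - w'‖₊ : ℝ≥0∞) * (‖r‖₊ : ℝ≥0∞) + (‖w'‖₊ : ℝ≥0∞) * (‖r - r'‖₊ : ℝ≥0∞) := by
          ring
  refine le_trans (lintegral_mono hpt) ?_
  rw [lintegral_add_left (show Measurable fun q : (E × E) × (E × E) =>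
    edist q.1.1 q.1.2 * (‖q.2.1‖₊ : ℝ≥0∞) from (measurable_fst.fst.edist measurable_fst.snd).mul
    (measurable_snd.fst.nnnorm.coe_nnreal_ennreal))]
  have hT1 : (∫⁻ q, edist q.1.1 q.1.2 * (‖q.2.1‖₊ : ℝ≥0∞) ∂(π.prod σ))
      = (∫⁻ p, edist p.1 p.2 ∂π) * (∫⁻ p : E × E, (‖p.1‖₊ : ℝ≥0∞) ∂σ) :=
    lintegral_prod_mul measurable_edist.aemeasurable
      (measurable_fst.nnnorm.coe_nnreal_ennreal.aemeasurable)
  have hT2 : (∫⁻ q, (‖q.1.2‖₊ : ℝ≥0∞) * edist q.2.1 q.2.2 ∂(π.prod σ))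
      = (∫⁻ p : E × E, (‖p.2‖₊ : ℝ≥0∞) ∂π) * (∫⁻ p, edist p.1 p.2 ∂σ) :=
    lintegral_prod_mul (measurable_snd.nnnorm.coe_nnreal_ennreal.aemeasurable)
      measurable_edist.aemeasurable
  rw [hT1, hT2]
  have hR1 : (∫⁻ p : E × E, (‖p.1‖₊ : ℝ≥0∞) ∂σ) = ∫⁻ r, (‖r‖₊ : ℝ≥0∞) ∂ R := by
    rw [← hσ.1, lintegral_map measurable_nnnorm.coe_nnreal_ennreal measurable_fst]
  have hW1 : (∫⁻ p : E × E, (‖p.2‖₊ : ℝ≥0∞) ∂π) ≤ ENNReal.ofReal B := by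
    have hae : ∀ᵐ p ∂π, (‖p.2‖₊ : ℝ≥0∞) ≤ ENNReal.ofReal B := by
      have h0 : π (Prod.snd ⁻¹' 𝒲ᶜ) = 0 := by
        rw [← Measure.map_apply measurable_snd hmeas.compl, hπ.2]; exact hW'supp
      refine measure_mono_null ?_ h0 |> (ae_iff.mpr ·)
      intro p hp
      simp only [Set.mem_setOf_eq] at hp
      by_contra hmem
      simp only [Set.mem_preimage, Set.mem_compl_iff, not_not] at hmem
      exact hp (by rw [← enorm_eq_nnnorm, ← ofReal_norm]
                   exact ENNReal.ofReal_le_ofReal (hBbound _ hmem))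
    calc (∫⁻ p : E × E, (‖p.2‖₊ : ℝ≥0∞) ∂π)
        ≤ ∫⁻ _, ENNReal.ofReal B ∂π := lintegral_mono_ae hae
      _ = ENNReal.ofReal B := by simp
  rw [hR1, mul_comm]
  gcongr

end Aux

theorem stmt_0 {K : ℕ} (hK : 1 ≤ K)
    (𝒲 : Set (EuclideanSpace ℝ (Fin K))) (hcomp : IsCompact 𝒲)
    (B : ℝ) (hB : B = sSup ((fun w => ‖w‖) '' 𝒲))
    (W W' R R' : Measure (EuclideanSpace ℝ (Fin K)))
    [IsProbabilityMeasure W] [IsProbabilityMeasure W']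
    [IsProbabilityMeasure R] [IsProbabilityMeasure R']
    (hWsupp : W 𝒲ᶜ = 0) (hW'supp : W' 𝒲ᶜ = 0)
    (hRm : ∫⁻ r, (‖r‖₊ : ℝ≥0∞) ∂ R < ⊤) (hR'm : ∫⁻ r, (‖r‖₊ : ℝ≥0∞) ∂ R' < ⊤) :
    W1 (outcomeLaw W R) (outcomeLaw W' R')
      ≤ (∫⁻ r, (‖r‖₊ : ℝ≥0∞) ∂ R) * W1 W W' + ENNReal.ofReal B * W1 R R' := by
  have hmeas : MeasurableSet 𝒲 := hcomp.isClosed.measurableSet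
  have hbdd : BddAbove ((fun w => ‖w‖) '' 𝒲) := (hcomp.image continuous_norm).bddAbove
  have hBbound : ∀ w ∈ 𝒲, ‖w‖ ≤ B := fun w hw => hB ▸ le_csSup hbdd ⟨w, hw, rfl⟩
  set m1 := ∫⁻ r, (‖r‖₊ : ℝ≥0∞) ∂ R with hm1
  set c := ENNReal.ofReal B with hc
  refine ENNReal.le_of_forall_pos_le_add fun ε hε hfin => ?_
  have hε2 : (ε : ℝ≥0∞) / 2 ≠ 0 := by
    simp [ENNReal.div_eq_top, hε.ne']
  -- find a near-optimal coupling of W, W'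
  have hπex : ∃ π, IsCoupling π W W' ∧
      m1 * (∫⁻ p, edist p.1 p.2 ∂π) ≤ m1 * W1 W W' + (ε : ℝ≥0∞) / 2 := by
    rcases eq_or_ne m1 0 with h0 | h0
    · refine ⟨W.prod W', ⟨by simp, by simp⟩, by simp [h0]⟩
    · have hAtop : W1 W W' ≠ ⊤ := by
        intro htop
        rw [htop, ENNReal.mul_top h0] at hfin
        simp at hfin
      have hlt : W1 W W' < W1 W W' + (ε : ℝ≥0∞) / 2 / m1 :=
        ENNReal.lt_add_right hAtop (by
          simp [ENNReal.div_eq_zero_iff, hε.ne', hRm.ne, ENNReal.div_eq_top])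
      rw [W1] at hlt
      obtain ⟨π, hlt⟩ := iInf_lt_iff.mp hlt
      obtain ⟨hcp, hlt⟩ := iInf_lt_iff.mp hlt
      refine ⟨π, hcp, ?_⟩
      calc m1 * (∫⁻ p, edist p.1 p.2 ∂π)
          ≤ m1 * (W1 W W' + (ε : ℝ≥0∞) / 2 / m1) := by gcongr; exact hlt.le
        _ = m1 * W1 W W' + m1 * ((ε : ℝ≥0∞) / 2 / m1) := by rw [mul_add]
        _ ≤ m1 * W1 W W' + (ε : ℝ≥0∞) / 2 := by gcongr; exact ENNReal.mul_div_le
  have hσex : ∃ σ, IsCoupling σ R R' ∧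
      c * (∫⁻ p, edist p.1 p.2 ∂σ) ≤ c * W1 R R' + (ε : ℝ≥0∞) / 2 := by
    rcases eq_or_ne c 0 with h0 | h0
    · refine ⟨R.prod R', ⟨by simp, by simp⟩, by simp [h0]⟩
    · have hAtop : W1 R R' ≠ ⊤ := by
        intro htop
        rw [htop, ENNReal.mul_top h0] at hfin
        simp at hfin
      have hlt : W1 R R' < W1 R R' + (ε : ℝ≥0∞) / 2 / c :=
        ENNReal.lt_add_right hAtop (by
          simp [ENNReal.div_eq_zero_iff, hε.ne', ENNReal.div_eq_top, hc])
      rw [W1] at hlt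
      obtain ⟨σ, hlt⟩ := iInf_lt_iff.mp hlt
      obtain ⟨hcp, hlt⟩ := iInf_lt_iff.mp hlt
      refine ⟨σ, hcp, ?_⟩
      calc c * (∫⁻ p, edist p.1 p.2 ∂σ)
          ≤ c * (W1 R R' + (ε : ℝ≥0∞) / 2 / c) := by gcongr; exact hlt.le
        _ = c * W1 R R' + c * ((ε : ℝ≥0∞) / 2 / c) := by rw [mul_add]
        _ ≤ c * W1 R R' + (ε : ℝ≥0∞) / 2 := by gcongr; exact ENNReal.mul_div_le
  obtain ⟨π, hπc, hπle⟩ := hπex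
  obtain ⟨σ, hσc, hσle⟩ := hσex
  calc W1 (outcomeLaw W R) (outcomeLaw W' R')
      ≤ m1 * (∫⁻ p, edist p.1 p.2 ∂π) + c * (∫⁻ p, edist p.1 p.2 ∂σ) :=
        key_estimate 𝒲 hmeas B hBbound W W' R R' hW'supp π σ hπc hσc
    _ ≤ (m1 * W1 W W' + (ε : ℝ≥0∞) / 2) + (c * W1 R R' + (ε : ℝ≥0∞) / 2) :=
        add_le_add hπle hσle
    _ = m1 * W1 W W' + c * W1 R R' + ε := by
        rw [add_add_add_comm, ENNReal.add_halves]
end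
end

section
/- Let K ≥ 1 and let W be a Borel probability measure on ℝ^K with finite first moment; set c := ∫ ‖w‖ dW(w). Then for all Borel probability measures R and R' on ℝ^K with finite first moments, W₁(Y_{W,R}, Y_{W,R'}) ≤ c · W₁(R, R'). In particular, if W₁(R, R̂) ≤ ε for a center measure R̂ and radius ε ≥ 0, then W₁(Y_{W,R}, Y_{W,R̂}) ≤ c·ε. -/
open MeasureTheory ENNReal

noncomputable section

lemma IsCoupling.isProbabilityMeasure {X Y : Type*} [MeasurableSpace X] [MeasurableSpace Y]
    {π : Measure (X × Y)} {μ : Measure X} {ν : Measure Y} [IsProbabilityMeasure μ]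
    (h : IsCoupling π μ ν) : IsProbabilityMeasure π := by
  refine ⟨?_⟩
  have h1 : π (Prod.fst ⁻¹' Set.univ) = μ Set.univ := by
    rw [← Measure.map_apply measurable_fst MeasurableSet.univ, h.1]
  simpa using h1

lemma W1_le_cost {X : Type*} [MeasurableSpace X] [PseudoEMetricSpace X]
    {μ ν : Measure X} {π : Measure (X × X)} (h : IsCoupling π μ ν) :
    W1 μ ν ≤ ∫⁻ p, edist p.1 p.2 ∂π :=
  iInf₂_le π h

lemma isCoupling_prod {X : Type*} [MeasurableSpace X] (μ ν : Measure X)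
    [IsProbabilityMeasure μ] [IsProbabilityMeasure ν] :
    IsCoupling (μ.prod ν) μ ν := by
  constructor <;> simp

lemma lintegral_nnnorm_fst {K : ℕ} (R R' : Measure (EuclideanSpace ℝ (Fin K)))
    [SFinite R] [IsProbabilityMeasure R'] :
    ∫⁻ p, (‖p.1‖₊ : ℝ≥0∞) ∂(R.prod R') = ∫⁻ r, (‖r‖₊ : ℝ≥0∞) ∂ R := by
  have := lintegral_map (μ := R.prod R') (f := fun r => (‖r‖₊ : ℝ≥0∞))
    (g := Prod.fst) measurable_nnnorm.coe_nnreal_ennreal measurable_fst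
  rw [Measure.map_fst_prod, measure_univ, one_smul] at this
  rw [← this]

lemma lintegral_nnnorm_snd {K : ℕ} (R R' : Measure (EuclideanSpace ℝ (Fin K)))
    [IsProbabilityMeasure R] [SFinite R'] :
    ∫⁻ p, (‖p.2‖₊ : ℝ≥0∞) ∂(R.prod R') = ∫⁻ r, (‖r‖₊ : ℝ≥0∞) ∂ R' := by
  have := lintegral_map (μ := R.prod R') (f := fun r => (‖r‖₊ : ℝ≥0∞))
    (g := Prod.snd) measurable_nnnorm.coe_nnreal_ennreal measurable_snd
  rw [Measure.map_snd_prod, measure_univ, one_smul] at this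
  rw [← this]

lemma W1_lt_top {K : ℕ} (R R' : Measure (EuclideanSpace ℝ (Fin K)))
    [IsProbabilityMeasure R] [IsProbabilityMeasure R']
    (hR : (∫⁻ r, (‖r‖₊ : ℝ≥0∞) ∂ R) < ⊤) (hR' : (∫⁻ r, (‖r‖₊ : ℝ≥0∞) ∂ R') < ⊤) :
    W1 R R' < ⊤ := by
  have h1 : W1 R R' ≤ ∫⁻ p, edist p.1 p.2 ∂(R.prod R') := W1_le_cost (isCoupling_prod R R')
  have h2 : ∫⁻ p, edist p.1 p.2 ∂(R.prod R')
      ≤ ∫⁻ p, ((‖p.1‖₊ : ℝ≥0∞) + (‖p.2‖₊ : ℝ≥0∞)) ∂(R.prod R') := by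
    refine lintegral_mono fun p => ?_
    rw [edist_nndist, nndist_eq_nnnorm, ← ENNReal.coe_add]
    exact ENNReal.coe_le_coe.2 (nnnorm_sub_le _ _)
  rw [lintegral_add_left (measurable_fst.nnnorm.coe_nnreal_ennreal),
    lintegral_nnnorm_fst, lintegral_nnnorm_snd] at h2
  exact lt_of_le_of_lt (h1.trans h2) (ENNReal.add_lt_top.2 ⟨hR, hR'⟩)

lemma key {K : ℕ} (W : Measure (EuclideanSpace ℝ (Fin K))) [IsProbabilityMeasure W]
    (R R' : Measure (EuclideanSpace ℝ (Fin K))) [IsProbabilityMeasure R]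
    [IsProbabilityMeasure R']
    (π : Measure (EuclideanSpace ℝ (Fin K) × EuclideanSpace ℝ (Fin K)))
    (hπ : IsCoupling π R R') :
    W1 (outcomeLaw W R) (outcomeLaw W R')
      ≤ (∫⁻ w, (‖w‖₊ : ℝ≥0∞) ∂W) * ∫⁻ p, edist p.1 p.2 ∂π := by
  haveI : IsProbabilityMeasure π := hπ.isProbabilityMeasure
  set T : EuclideanSpace ℝ (Fin K) × (EuclideanSpace ℝ (Fin K) × EuclideanSpace ℝ (Fin K))
      → ℝ × ℝ := fun q => ((inner ℝ q.2.1 q.1 : ℝ), (inner ℝ q.2.2 q.1 : ℝ)) with hT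
  have hTm : Measurable T :=
    (measurable_snd.fst.inner measurable_fst).prodMk (measurable_snd.snd.inner measurable_fst)
  have hfst : ((W.prod π).map T).map Prod.fst = outcomeLaw W R := by
    rw [Measure.map_map measurable_fst hTm]
    have h1 : W.prod R = (W.prod π).map (Prod.map id Prod.fst) := by
      calc W.prod R = (W.map id).prod (π.map Prod.fst) := by rw [Measure.map_id, hπ.1]
        _ = (W.prod π).map (Prod.map id Prod.fst) :=
          Measure.map_prod_map _ _ measurable_id measurable_fst
    rw [outcomeLaw, h1, Measure.map_map (measurable_snd.inner measurable_fst)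
      (measurable_id.prodMap measurable_fst)]
    rfl
  have hsnd : ((W.prod π).map T).map Prod.snd = outcomeLaw W R' := by
    rw [Measure.map_map measurable_snd hTm]
    have h1 : W.prod R' = (W.prod π).map (Prod.map id Prod.snd) := by
      calc W.prod R' = (W.map id).prod (π.map Prod.snd) := by rw [Measure.map_id, hπ.2]
        _ = (W.prod π).map (Prod.map id Prod.snd) :=
          Measure.map_prod_map _ _ measurable_id measurable_snd
    rw [outcomeLaw, h1, Measure.map_map (measurable_snd.inner measurable_fst)
      (measurable_id.prodMap measurable_snd)]
    rfl
  have hle : W1 (outcomeLaw W R) (outcomeLaw W R')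
      ≤ ∫⁻ p, edist p.1 p.2 ∂((W.prod π).map T) := W1_le_cost ⟨hfst, hsnd⟩
  refine hle.trans ?_
  rw [lintegral_map (measurable_fst.edist measurable_snd) hTm]
  have hpt : ∀ q, edist (T q).1 (T q).2 ≤ (‖q.1‖₊ : ℝ≥0∞) * edist q.2.1 q.2.2 := by
    intro q
    rw [hT]
    simp only
    rw [edist_nndist, nndist_eq_nnnorm, edist_nndist, nndist_eq_nnnorm, ← ENNReal.coe_mul]
    refine ENNReal.coe_le_coe.2 ?_
    have : (inner ℝ q.2.1 q.1 : ℝ) - (inner ℝ q.2.2 q.1 : ℝ) = (inner ℝ (q.2.1 - q.2.2) q.1 : ℝ) := by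
      rw [inner_sub_left]
    rw [this]
    calc ‖(inner ℝ (q.2.1 - q.2.2) q.1 : ℝ)‖₊ ≤ ‖q.2.1 - q.2.2‖₊ * ‖q.1‖₊ :=
          nnnorm_inner_le_nnnorm _ _
      _ = ‖q.1‖₊ * ‖q.2.1 - q.2.2‖₊ := mul_comm _ _
  calc ∫⁻ q, edist (T q).1 (T q).2 ∂(W.prod π)
      ≤ ∫⁻ q, (‖q.1‖₊ : ℝ≥0∞) * edist q.2.1 q.2.2 ∂(W.prod π) := lintegral_mono hpt
    _ = (∫⁻ w, (‖w‖₊ : ℝ≥0∞) ∂W) * ∫⁻ p, edist p.1 p.2 ∂π :=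
        lintegral_prod_mul measurable_nnnorm.coe_nnreal_ennreal.aemeasurable
          (measurable_fst.edist measurable_snd).aemeasurable

theorem stmt_1 {K : ℕ} (hK : 1 ≤ K)
    (W : Measure (EuclideanSpace ℝ (Fin K))) [IsProbabilityMeasure W]
    (hWm : ∫⁻ w, (‖w‖₊ : ℝ≥0∞) ∂W < ⊤) :
    (∀ R R' : Measure (EuclideanSpace ℝ (Fin K)),
        IsProbabilityMeasure R → IsProbabilityMeasure R' →
        (∫⁻ r, (‖r‖₊ : ℝ≥0∞) ∂ R) < ⊤ → (∫⁻ r, (‖r‖₊ : ℝ≥0∞) ∂ R') < ⊤ →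
        W1 (outcomeLaw W R) (outcomeLaw W R')
          ≤ (∫⁻ w, (‖w‖₊ : ℝ≥0∞) ∂W) * W1 R R') ∧
    (∀ (R Rhat : Measure (EuclideanSpace ℝ (Fin K))) (ε : ℝ),
        IsProbabilityMeasure R → IsProbabilityMeasure Rhat →
        (∫⁻ r, (‖r‖₊ : ℝ≥0∞) ∂ R) < ⊤ → (∫⁻ r, (‖r‖₊ : ℝ≥0∞) ∂ Rhat) < ⊤ →
        0 ≤ ε → W1 R Rhat ≤ ENNReal.ofReal ε →
        W1 (outcomeLaw W R) (outcomeLaw W Rhat)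
          ≤ (∫⁻ w, (‖w‖₊ : ℝ≥0∞) ∂W) * ENNReal.ofReal ε) := by
  set c : ℝ≥0∞ := ∫⁻ w, (‖w‖₊ : ℝ≥0∞) ∂W with hc
  have main : ∀ R R' : Measure (EuclideanSpace ℝ (Fin K)),
      IsProbabilityMeasure R → IsProbabilityMeasure R' →
      (∫⁻ r, (‖r‖₊ : ℝ≥0∞) ∂ R) < ⊤ → (∫⁻ r, (‖r‖₊ : ℝ≥0∞) ∂ R') < ⊤ →
      W1 (outcomeLaw W R) (outcomeLaw W R') ≤ c * W1 R R' := by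
    intro R R' hRp hR'p hR hR'
    haveI := hRp; haveI := hR'p
    have hWfin : W1 R R' < ⊤ := W1_lt_top R R' hR hR'
    rcases eq_or_ne c 0 with hc0 | hc0
    · -- c = 0 : use any finite-cost coupling
      have hcost : ∫⁻ p, edist p.1 p.2 ∂(R.prod R') < ⊤ := by
        have h2 : ∫⁻ p, edist p.1 p.2 ∂(R.prod R')
            ≤ ∫⁻ p, ((‖p.1‖₊ : ℝ≥0∞) + (‖p.2‖₊ : ℝ≥0∞)) ∂(R.prod R') := by
          refine lintegral_mono fun p => ?_
          rw [edist_nndist, nndist_eq_nnnorm, ← ENNReal.coe_add]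
          exact ENNReal.coe_le_coe.2 (nnnorm_sub_le _ _)
        rw [lintegral_add_left (measurable_fst.nnnorm.coe_nnreal_ennreal),
          lintegral_nnnorm_fst, lintegral_nnnorm_snd] at h2
        exact lt_of_le_of_lt h2 (ENNReal.add_lt_top.2 ⟨hR, hR'⟩)
      have hkey := key W R R' (R.prod R') (isCoupling_prod R R')
      rw [← hc, hc0, zero_mul] at hkey
      rw [hc0, zero_mul]
      exact hkey
    · -- c ≠ 0
      refine ENNReal.le_of_forall_pos_le_add fun ε hε hfin => ?_
      have hcne : c ≠ ⊤ := by rw [hc]; exact hWm.ne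
      have hδpos : (0 : ℝ≥0∞) < (ε : ℝ≥0∞) / c :=
        ENNReal.div_pos (by exact_mod_cast hε.ne') hcne
      have hlt : W1 R R' < W1 R R' + (ε : ℝ≥0∞) / c :=
        ENNReal.lt_add_right hWfin.ne hδpos.ne'
      rw [W1] at hlt
      obtain ⟨π, hπlt⟩ := iInf_lt_iff.mp hlt
      have hπc : IsCoupling π R R' := by
        by_contra h
        simp [h] at hπlt
      rw [iInf_pos hπc] at hπlt
      calc W1 (outcomeLaw W R) (outcomeLaw W R') ≤ c * ∫⁻ p, edist p.1 p.2 ∂π :=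
            key W R R' π hπc
        _ ≤ c * (W1 R R' + (ε : ℝ≥0∞) / c) := mul_le_mul_right hπlt.le c
        _ = c * W1 R R' + c * ((ε : ℝ≥0∞) / c) := mul_add _ _ _
        _ ≤ c * W1 R R' + ε := add_le_add_right ENNReal.mul_div_le _
  refine ⟨main, ?_⟩
  intro R Rhat ε hRp hRhp hR hRh hε hW1
  haveI := hRp; haveI := hRhp
  calc W1 (outcomeLaw W R) (outcomeLaw W Rhat) ≤ c * W1 R Rhat := main R Rhat hRp hRhp hR hRh
    _ ≤ c * ENNReal.ofReal ε := mul_le_mul_right hW1 c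
end
end

section
/- Let K ≥ 1, let 𝒲 ⊂ ℝ^K be nonempty, convex, and compact, let Q be a Borel probability measure on 𝒲 with barycenter w̄ := ∫ w dQ(w) (so w̄ ∈ 𝒲), and let R be a Borel probability measure on ℝ^K with finite first moment. Let u : ℝ → ℝ be concave and nondecreasing with (w,r) ↦ u(⟨r,w⟩) integrable with respect to Q ⊗ R, and let γ ≥ 0. Define L(w,r) := −⟨r,w⟩ and L̄(w,r) := −⟨r,w̄⟩ on the product space (𝒲 × ℝ^K, Q ⊗ R). Let ρ be a real-valued functional on (Q ⊗ R)-integrable functions on 𝒲 × ℝ^K that is invariant under (Q ⊗ R)-almost-everywhere equality and satisfies dilatation monotonicity: for every integrable function f and every sub-σ-algebra 𝒢 of the product σ-algebra, ρ of the conditional expectation of f given 𝒢 is at most ρ(f). Then ∫ u(⟨r,w̄⟩) dR(r) − γ·ρ(L̄) ≥ ∫∫ u(⟨r,w⟩) d(Q ⊗ R)(w,r) − γ·ρ(L). -/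
open MeasureTheory ENNReal

noncomputable section

set_option maxHeartbeats 1000000 in
theorem stmt_4 {K : ℕ} (hK : 1 ≤ K)
    (𝒲 : Set (EuclideanSpace ℝ (Fin K))) (hne : 𝒲.Nonempty)
    (hconv : Convex ℝ 𝒲) (hcomp : IsCompact 𝒲)
    (Q : Measure (EuclideanSpace ℝ (Fin K))) [IsProbabilityMeasure Q]
    (hQsupp : Q 𝒲ᶜ = 0)
    (wbar : EuclideanSpace ℝ (Fin K)) (hwbar : wbar = ∫ w, w ∂Q) (hwbarmem : wbar ∈ 𝒲)
    (R : Measure (EuclideanSpace ℝ (Fin K))) [IsProbabilityMeasure R]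
    (hRm : ∫⁻ r, (‖r‖₊ : ℝ≥0∞) ∂ R < ⊤)
    (u : ℝ → ℝ) (hu_concave : ConcaveOn ℝ Set.univ u) (hu_mono : Monotone u)
    (hu_int : Integrable (fun p : EuclideanSpace ℝ (Fin K) × EuclideanSpace ℝ (Fin K) =>
      u ((inner ℝ p.2 p.1 : ℝ))) (Q.prod R))
    (γ : ℝ) (hγ : 0 ≤ γ)
    (ρ : (EuclideanSpace ℝ (Fin K) × EuclideanSpace ℝ (Fin K) → ℝ) → ℝ)
    -- invariance of ρ under (Q ⊗ R)-a.e. equality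
    (hρ_ae : ∀ f g : EuclideanSpace ℝ (Fin K) × EuclideanSpace ℝ (Fin K) → ℝ,
        f =ᵐ[Q.prod R] g → ρ f = ρ g)
    -- dilatation monotonicity: ρ(E[f | 𝒢]) ≤ ρ(f)
    (hρ_dil : ∀ f : EuclideanSpace ℝ (Fin K) × EuclideanSpace ℝ (Fin K) → ℝ,
        Integrable f (Q.prod R) →
        ∀ m : MeasurableSpace (EuclideanSpace ℝ (Fin K) × EuclideanSpace ℝ (Fin K)),
          m ≤ (inferInstance :
              MeasurableSpace (EuclideanSpace ℝ (Fin K) × EuclideanSpace ℝ (Fin K))) →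
          ρ (MeasureTheory.condExp m (Q.prod R) f) ≤ ρ f) :
    (∫ p, u ((inner ℝ p.2 p.1 : ℝ)) ∂(Q.prod R))
        - γ * ρ (fun p => -(inner ℝ p.2 p.1 : ℝ))
      ≤ (∫ r, u ((inner ℝ r wbar : ℝ)) ∂ R)
        - γ * ρ (fun p => -(inner ℝ p.2 wbar : ℝ)) := by
  -- basic facts
  obtain ⟨C, hC⟩ := isBounded_iff_forall_norm_le.mp hcomp.isBounded
  have hC0 : 0 ≤ C := le_trans (norm_nonneg _) (hC _ hne.choose_spec)
  have hQae : ∀ᵐ w ∂Q, w ∈ 𝒲 := by rw [ae_iff]; exact hQsupp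
  have hQw : ∀ᵐ w ∂Q, ‖w‖ ≤ C := hQae.mono fun w hw => hC w hw
  have hQid : Integrable (fun w => w) Q :=
    Integrable.mono' (integrable_const C) continuous_id.aestronglyMeasurable hQw
  have hRnorm : Integrable (fun r => ‖r‖) R := by
    refine ⟨continuous_norm.aestronglyMeasurable, ?_⟩
    simpa [HasFiniteIntegral, enorm_eq_nnnorm] using hRm
  have hu_cont : Continuous u := by
    rw [← continuousOn_univ]
    exact hu_concave.continuousOn isOpen_univ
  have hinner_wbar : ∀ r : EuclideanSpace ℝ (Fin K),
      ∫ w, (inner ℝ r w : ℝ) ∂Q = (inner ℝ r wbar : ℝ) := by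
    intro r
    rw [hwbar]
    exact integral_inner hQid r
  -- slope bound for u
  have hs : 0 ≤ u 1 - u 0 := by
    have := hu_mono (zero_le_one (α := ℝ)); linarith
  have hub : ∀ t : ℝ, u t ≤ u 1 + (u 1 - u 0) * |t| := by
    intro t
    rcases le_or_gt t 1 with h | h
    · have h1 := hu_mono h
      have h2 : 0 ≤ (u 1 - u 0) * |t| := mul_nonneg hs (abs_nonneg t)
      linarith
    · have hsl := hu_concave.slope_anti_adjacent (Set.mem_univ (0:ℝ)) (Set.mem_univ t)
        one_pos h
      rw [div_le_div_iff₀ (by linarith) (by norm_num)] at hsl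
      have h1 : u t ≤ u 1 + (u 1 - u 0) * (t - 1) := by nlinarith
      have h2 : (u 1 - u 0) * (t - 1) ≤ (u 1 - u 0) * |t| := by
        have : t - 1 ≤ |t| := by cases abs_cases t <;> linarith
        exact mul_le_mul_of_nonneg_left this hs
      linarith
  -- a.e. bound on product
  have hμae : ∀ᵐ p ∂(Q.prod R), p.1 ∈ 𝒲 := by
    rw [ae_iff]
    have h1 : {p : EuclideanSpace ℝ (Fin K) × EuclideanSpace ℝ (Fin K) | ¬ p.1 ∈ 𝒲}
        = 𝒲ᶜ ×ˢ Set.univ := by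
      ext p; simp [Set.mem_prod]
    rw [h1, Measure.prod_prod, hQsupp, zero_mul]
  -- integrability of losses
  have hL_meas : Continuous fun p : EuclideanSpace ℝ (Fin K) × EuclideanSpace ℝ (Fin K) =>
      -(inner ℝ p.2 p.1 : ℝ) :=
    (continuous_inner.comp (continuous_snd.prodMk continuous_fst)).neg
  have hdom : Integrable
      (fun p : EuclideanSpace ℝ (Fin K) × EuclideanSpace ℝ (Fin K) => C * ‖p.2‖)
      (Q.prod R) := by
    have h2 : Measure.map Prod.snd (Q.prod R) = R := by
      rw [Measure.map_snd_prod, measure_univ, one_smul]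
    have h3 : Integrable (fun r : EuclideanSpace ℝ (Fin K) => C * ‖r‖)
        (Measure.map Prod.snd (Q.prod R)) := by
      rw [h2]; exact hRnorm.const_mul C
    exact (integrable_map_measure h3.aestronglyMeasurable
      measurable_snd.aemeasurable).mp h3
  have hL_int : Integrable
      (fun p : EuclideanSpace ℝ (Fin K) × EuclideanSpace ℝ (Fin K) =>
        -(inner ℝ p.2 p.1 : ℝ)) (Q.prod R) := by
    refine Integrable.mono' hdom hL_meas.aestronglyMeasurable ?_
    filter_upwards [hμae] with p hp
    rw [norm_neg]
    calc ‖(inner ℝ p.2 p.1 : ℝ)‖ ≤ ‖p.2‖ * ‖p.1‖ := norm_inner_le_norm _ _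
      _ ≤ ‖p.2‖ * C := mul_le_mul_of_nonneg_left (hC _ hp) (norm_nonneg _)
      _ = C * ‖p.2‖ := mul_comm _ _
  have hLbar_meas : Continuous fun p : EuclideanSpace ℝ (Fin K) × EuclideanSpace ℝ (Fin K) =>
      -(inner ℝ p.2 wbar : ℝ) :=
    (continuous_inner.comp (continuous_snd.prodMk continuous_const)).neg
  have hLbar_int : Integrable
      (fun p : EuclideanSpace ℝ (Fin K) × EuclideanSpace ℝ (Fin K) =>
        -(inner ℝ p.2 wbar : ℝ)) (Q.prod R) := by
    refine Integrable.mono' hdom hLbar_meas.aestronglyMeasurable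
      (Filter.Eventually.of_forall fun p => ?_)
    rw [norm_neg]
    calc ‖(inner ℝ p.2 wbar : ℝ)‖ ≤ ‖p.2‖ * ‖wbar‖ := norm_inner_le_norm _ _
      _ ≤ ‖p.2‖ * C := mul_le_mul_of_nonneg_left (hC _ hwbarmem) (norm_nonneg _)
      _ = C * ‖p.2‖ := mul_comm _ _
  -- Part B : ρ (Lbar) ≤ ρ (L) via dilatation monotonicity
  have hm : MeasurableSpace.comap
        (Prod.snd : EuclideanSpace ℝ (Fin K) × EuclideanSpace ℝ (Fin K)
          → EuclideanSpace ℝ (Fin K)) inferInstance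
      ≤ (inferInstance :
          MeasurableSpace (EuclideanSpace ℝ (Fin K) × EuclideanSpace ℝ (Fin K))) :=
    measurable_snd.comap_le
  haveI : SigmaFinite ((Q.prod R).trim hm) := inferInstance
  have key : (fun p : EuclideanSpace ℝ (Fin K) × EuclideanSpace ℝ (Fin K) =>
        -(inner ℝ p.2 wbar : ℝ)) =ᵐ[Q.prod R]
      MeasureTheory.condExp (MeasurableSpace.comap Prod.snd inferInstance) (Q.prod R)
        (fun p => -(inner ℝ p.2 p.1 : ℝ)) := by
    refine ae_eq_condExp_of_forall_setIntegral_eq hm hL_int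
      (fun t _ _ => hLbar_int.integrableOn) ?_ ?_
    · rintro t ⟨v, hv, rfl⟩ _
      have hpre : (Prod.snd : EuclideanSpace ℝ (Fin K) × EuclideanSpace ℝ (Fin K)
            → EuclideanSpace ℝ (Fin K)) ⁻¹' v
          = (Set.univ : Set (EuclideanSpace ℝ (Fin K))) ×ˢ v := by
        ext p; simp [Set.mem_prod]
      have hres : (Q.prod R).restrict (Prod.snd ⁻¹' v) = Q.prod (R.restrict v) := by
        rw [hpre, ← Measure.prod_restrict, Measure.restrict_univ]
      have hL_int' : Integrable
          (fun p : EuclideanSpace ℝ (Fin K) × EuclideanSpace ℝ (Fin K) =>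
            -(inner ℝ p.2 p.1 : ℝ)) (Q.prod (R.restrict v)) := by
        rw [← hres]; exact hL_int.restrict
      have hLbar_int' : Integrable
          (fun p : EuclideanSpace ℝ (Fin K) × EuclideanSpace ℝ (Fin K) =>
            -(inner ℝ p.2 wbar : ℝ)) (Q.prod (R.restrict v)) := by
        rw [← hres]; exact hLbar_int.restrict
      show (∫ p, -(inner ℝ p.2 wbar : ℝ) ∂((Q.prod R).restrict (Prod.snd ⁻¹' v)))
          = ∫ p, -(inner ℝ p.2 p.1 : ℝ) ∂((Q.prod R).restrict (Prod.snd ⁻¹' v))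
      rw [hres, integral_prod_symm _ hL_int', integral_prod_symm _ hLbar_int']
      refine integral_congr_ae (Filter.Eventually.of_forall fun r => ?_)
      show (∫ w, -(inner ℝ r wbar : ℝ) ∂Q) = ∫ w, -(inner ℝ r w : ℝ) ∂Q
      rw [integral_neg, integral_neg, hinner_wbar r]
      simp [integral_const]
    · refine StronglyMeasurable.aestronglyMeasurable ?_
      have hsnd : @Measurable (EuclideanSpace ℝ (Fin K) × EuclideanSpace ℝ (Fin K))
          (EuclideanSpace ℝ (Fin K)) (MeasurableSpace.comap Prod.snd inferInstance) _
          Prod.snd := Measurable.of_comap_le le_rfl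
      exact ((continuous_inner.comp
          (continuous_id.prodMk continuous_const)).neg.stronglyMeasurable).comp_measurable hsnd
  have hρB : ρ (fun p : EuclideanSpace ℝ (Fin K) × EuclideanSpace ℝ (Fin K) =>
        -(inner ℝ p.2 wbar : ℝ))
      ≤ ρ (fun p => -(inner ℝ p.2 p.1 : ℝ)) := by
    rw [hρ_ae _ _ key]
    exact hρ_dil _ hL_int _ le_rfl
  -- Part A : Jensen
  have hswap : ∫ p, u ((inner ℝ p.2 p.1 : ℝ)) ∂(Q.prod R)
      = ∫ r, ∫ w, u ((inner ℝ r w : ℝ)) ∂Q ∂ R := integral_prod_symm _ hu_int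
  have h_int_lhs : Integrable
      (fun r : EuclideanSpace ℝ (Fin K) => ∫ w, u ((inner ℝ r w : ℝ)) ∂Q) R :=
    hu_int.integral_prod_right
  have hJensen : ∀ᵐ r ∂ R, (∫ w, u ((inner ℝ r w : ℝ)) ∂Q) ≤ u ((inner ℝ r wbar : ℝ)) := by
    filter_upwards [hu_int.prod_left_ae] with r hr
    have hf_int : Integrable (fun w : EuclideanSpace ℝ (Fin K) => (inner ℝ r w : ℝ)) Q := by
      refine Integrable.mono' (integrable_const (‖r‖ * C))
        ((Continuous.inner continuous_const continuous_id).aestronglyMeasurable) ?_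
      filter_upwards [hQae] with w hw
      calc ‖(inner ℝ r w : ℝ)‖ ≤ ‖r‖ * ‖w‖ := norm_inner_le_norm _ _
        _ ≤ ‖r‖ * C := mul_le_mul_of_nonneg_left (hC _ hw) (norm_nonneg _)
    have hJ := hu_concave.le_map_integral hu_cont.continuousOn isClosed_univ
      (Filter.Eventually.of_forall fun w => Set.mem_univ _) hf_int hr
    rwa [hinner_wbar r] at hJ
  have h_int_rhs : Integrable
      (fun r : EuclideanSpace ℝ (Fin K) => u ((inner ℝ r wbar : ℝ))) R := by
    refine integrable_of_le_of_le
      ((hu_cont.comp (Continuous.inner continuous_id continuous_const)).aestronglyMeasurable)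
      hJensen (Filter.Eventually.of_forall fun r => ?_)
      h_int_lhs (((integrable_const (u 1)).add ((hRnorm.const_mul C).const_mul (u 1 - u 0))))
    have h1 : |(inner ℝ r wbar : ℝ)| ≤ C * ‖r‖ := by
      calc |(inner ℝ r wbar : ℝ)| ≤ ‖r‖ * ‖wbar‖ := abs_real_inner_le_norm _ _
        _ ≤ ‖r‖ * C := mul_le_mul_of_nonneg_left (hC _ hwbarmem) (norm_nonneg _)
        _ = C * ‖r‖ := mul_comm _ _
    have h2 := hub ((inner ℝ r wbar : ℝ))
    have h3 : (u 1 - u 0) * |(inner ℝ r wbar : ℝ)| ≤ (u 1 - u 0) * (C * ‖r‖) :=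
      mul_le_mul_of_nonneg_left h1 hs
    have h4 : u ((inner ℝ r wbar : ℝ)) ≤ u 1 + (u 1 - u 0) * (C * ‖r‖) := by linarith
    simpa [mul_comm, mul_assoc, mul_left_comm] using h4
  have hA : (∫ p, u ((inner ℝ p.2 p.1 : ℝ)) ∂(Q.prod R))
      ≤ ∫ r, u ((inner ℝ r wbar : ℝ)) ∂ R := by
    rw [hswap]
    exact integral_mono_ae h_int_lhs h_int_rhs hJensen
  have hγρ : γ * ρ (fun p : EuclideanSpace ℝ (Fin K) × EuclideanSpace ℝ (Fin K) =>
        -(inner ℝ p.2 wbar : ℝ))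
      ≤ γ * ρ (fun p => -(inner ℝ p.2 p.1 : ℝ)) :=
    mul_le_mul_of_nonneg_left hρB hγ
  linarith
end
end

section
/- Let I ⊆ ℝ be an interval, let u : ℝ → ℝ be twice continuously differentiable on I with |u''(x)| ≤ M₂ for all x ∈ I, let K ≥ 1, let W be a Borel probability measure on ℝ^K with finite second moment, mean w̄ := ∫ w dW(w), and covariance matrix Σ_W, and let R be a Borel probability measure on ℝ^K with finite second moment. Assume ⟨r,w⟩ ∈ I for (W ⊗ R)-almost every (w,r) and ⟨r,w̄⟩ ∈ I for R-almost every r. Then ∫∫ u(⟨r,w⟩) dW(w) dR(r) ≥ ∫ u(⟨r,w̄⟩) dR(r) − (M₂/2) ∫ rᵀ Σ_W r dR(r). -/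
open MeasureTheory ENNReal

noncomputable section

/-- Second-order Taylor lower bound on a convex subset of `ℝ`. -/
lemma taylor_lb {I : Set ℝ} (hI : Convex ℝ I) {u u' u'' : ℝ → ℝ}
    (hu' : ∀ x ∈ I, HasDerivWithinAt u (u' x) I x)
    (hu'' : ∀ x ∈ I, HasDerivWithinAt u' (u'' x) I x)
    {M₂ : ℝ} (hM₂ : ∀ x ∈ I, |u'' x| ≤ M₂)
    {a x : ℝ} (ha : a ∈ I) (hx : x ∈ I) :
    u a + u' a * (x - a) - M₂ / 2 * (x - a) ^ 2 ≤ u x := by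
  have hbnd : ∀ t ∈ I, |u' t - u' a| ≤ M₂ * |t - a| := by
    intro t ht
    have := hI.norm_image_sub_le_of_norm_hasDerivWithin_le hu''
      (fun y hy => by simpa using hM₂ y hy) ha ht
    simpa [Real.norm_eq_abs] using this
  set g : ℝ → ℝ := fun t => u t - u' a * t + M₂ / 2 * (t - a) ^ 2 with hg
  set g' : ℝ → ℝ := fun t => u' t - u' a + M₂ * (t - a) with hg'
  have hgd : ∀ t ∈ I, HasDerivWithinAt g (g' t) I t := by
    intro t ht
    have h1 : HasDerivWithinAt (fun t : ℝ => u' a * t) (u' a) I t := by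
      simpa using ((hasDerivWithinAt_id t I).const_mul (u' a))
    have h2 : HasDerivWithinAt (fun t : ℝ => M₂ / 2 * (t - a) ^ 2) (M₂ * (t - a)) I t := by
      have : HasDerivWithinAt (fun t : ℝ => (t - a) ^ 2) (2 * (t - a)) I t := by
        simpa using (((hasDerivWithinAt_id t I).sub_const a).fun_pow 2)
      have := this.const_mul (M₂ / 2)
      rw [show M₂ * (t - a) = M₂ / 2 * (2 * (t - a)) by ring]; exact this
    simpa [hg, hg'] using ((hu' t ht).fun_sub h1).fun_add h2
  have hgc : ContinuousOn g I := fun t ht => (hgd t ht).continuousWithinAt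
  have key : g a ≤ g x := by
    rcases le_total a x with hax | hax
    · have hsub : Set.Icc a x ⊆ I := hI.ordConnected.out ha hx
      have hmono : MonotoneOn g (Set.Icc a x) := by
        apply monotoneOn_of_hasDerivWithinAt_nonneg (convex_Icc a x) (hgc.mono hsub)
        · intro t ht
          exact ((hgd t (hsub (interior_subset ht))).mono
            (Set.Subset.trans interior_subset hsub))
        · intro t ht
          rw [interior_Icc] at ht
          have h1 := hbnd t (hsub ⟨le_of_lt ht.1, le_of_lt ht.2⟩)
          have h2 : |t - a| = t - a := abs_of_nonneg (by linarith [ht.1])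
          rw [h2] at h1
          have := neg_abs_le (u' t - u' a)
          simp only [hg']
          nlinarith [abs_nonneg (u' t - u' a)]
      exact hmono (Set.left_mem_Icc.2 hax) (Set.right_mem_Icc.2 hax) hax
    · have hsub : Set.Icc x a ⊆ I := hI.ordConnected.out hx ha
      have hanti : AntitoneOn g (Set.Icc x a) := by
        apply antitoneOn_of_hasDerivWithinAt_nonpos (convex_Icc x a) (hgc.mono hsub)
        · intro t ht
          exact ((hgd t (hsub (interior_subset ht))).mono
            (Set.Subset.trans interior_subset hsub))
        · intro t ht
          rw [interior_Icc] at ht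
          have h1 := hbnd t (hsub ⟨le_of_lt ht.1, le_of_lt ht.2⟩)
          have h2 : |t - a| = a - t := by rw [abs_of_nonpos (by linarith [ht.2])]; ring
          rw [h2] at h1
          have := le_abs_self (u' t - u' a)
          simp only [hg']
          nlinarith
      exact hanti (Set.left_mem_Icc.2 hax) (Set.right_mem_Icc.2 hax) hax
  simp only [hg] at key
  nlinarith [key]

/-- Composition of a function continuous on a measurable set with a continuous map that lands
a.e. in that set is a.e. strongly measurable. -/
lemma aesm_comp {α : Type*} [MeasurableSpace α] [TopologicalSpace α] [BorelSpace α]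
    {μ : Measure α} {g : α → ℝ} (hg : Continuous g)
    {I : Set ℝ} (hIm : MeasurableSet I) {φ : ℝ → ℝ} (hφ : ContinuousOn φ I)
    (hae : ∀ᵐ a ∂μ, g a ∈ I) : AEStronglyMeasurable (fun a => φ (g a)) μ := by
  have hs : MeasurableSet (g ⁻¹' I) := hg.measurable hIm
  have h1 : μ.restrict (g ⁻¹' I) = μ := Measure.restrict_eq_self_of_ae_mem hae
  have h2 : ContinuousOn (fun a => φ (g a)) (g ⁻¹' I) :=
    hφ.comp hg.continuousOn (fun a ha => ha)
  have := h2.aestronglyMeasurable (μ := μ) hs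
  rwa [h1] at this

lemma int_one_add_norm_sq {α : Type*} [MeasurableSpace α] {μ : Measure α}
    [IsProbabilityMeasure μ] [NormedAddCommGroup α] [BorelSpace α]
    (h : ∫⁻ x, (‖x‖₊ : ℝ≥0∞) ^ (2 : ℕ) ∂μ < ⊤) :
    Integrable (fun x => (1 + ‖x‖) ^ 2) μ := by
  have h2 : Integrable (fun x : α => ‖x‖ ^ 2) μ := by
    refine ⟨(continuous_norm.pow 2).aestronglyMeasurable, ?_⟩
    rw [hasFiniteIntegral_def]
    convert h using 2 with x
    simp [← ENNReal.coe_pow, enorm_eq_nnnorm]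
  refine (((integrable_const (2:ℝ)).add (h2.const_mul 2)).mono'
      ((continuous_const.add continuous_norm).pow 2).aestronglyMeasurable ?_)
  filter_upwards with x
  simp only [Pi.add_apply]
  have := norm_nonneg x
  rw [Real.norm_eq_abs, abs_of_nonneg (by positivity)]
  nlinarith [sq_nonneg (1 - ‖x‖)]

lemma abs_coord_le {K : ℕ} (w : EuclideanSpace ℝ (Fin K)) (i : Fin K) : |w i| ≤ ‖w‖ := by
  have h := abs_real_inner_le_norm (EuclideanSpace.single i (1:ℝ)) w
  simpa [EuclideanSpace.inner_single_left, EuclideanSpace.norm_single] using h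

set_option maxHeartbeats 2000000 in
theorem stmt_5 {K : ℕ} (hK : 1 ≤ K)
    (I : Set ℝ) (hI : Set.OrdConnected I)
    (u u' u'' : ℝ → ℝ)
    (hu' : ∀ x ∈ I, HasDerivWithinAt u (u' x) I x)
    (hu'' : ∀ x ∈ I, HasDerivWithinAt u' (u'' x) I x)
    (hu''cont : ContinuousOn u'' I)
    (M₂ : ℝ) (hM₂ : ∀ x ∈ I, |u'' x| ≤ M₂)
    (W : Measure (EuclideanSpace ℝ (Fin K))) [IsProbabilityMeasure W]
    (hWm : ∫⁻ w, (‖w‖₊ : ℝ≥0∞) ^ (2 : ℕ) ∂W < ⊤)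
    (R : Measure (EuclideanSpace ℝ (Fin K))) [IsProbabilityMeasure R]
    (hRm : ∫⁻ r, (‖r‖₊ : ℝ≥0∞) ^ (2 : ℕ) ∂(R) < ⊤)
    (wbar : EuclideanSpace ℝ (Fin K)) (hwbar : wbar = ∫ w, w ∂W)
    -- the covariance matrix Σ_W of W
    (SigW : Matrix (Fin K) (Fin K) ℝ)
    (hSigW : ∀ i j, SigW i j = ∫ w, (w i - wbar i) * (w j - wbar j) ∂W)
    (hmemI : ∀ᵐ p ∂(W.prod R), ((inner ℝ p.2 p.1 : ℝ)) ∈ I)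
    (hmemI' : ∀ᵐ r ∂(R), ((inner ℝ r wbar : ℝ)) ∈ I) :
    (∫ r, u ((inner ℝ r wbar : ℝ)) ∂(R))
        - (M₂ / 2) * ∫ r, (∑ i, ∑ j, r i * SigW i j * r j) ∂(R)
      ≤ ∫ p, u ((inner ℝ p.2 p.1 : ℝ)) ∂(W.prod R) := by
  classical
  have hconv : Convex ℝ I := convex_iff_ordConnected.2 hI
  have hImeas : MeasurableSet I := hI.measurableSet
  have hucont : ContinuousOn u I := fun x hx => (hu' x hx).continuousWithinAt
  have hu'cont : ContinuousOn u' I := fun x hx => (hu'' x hx).continuousWithinAt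
  -- `I` is nonempty
  have hne : I.Nonempty := by
    by_contra hcon
    rw [Set.not_nonempty_iff_eq_empty] at hcon
    rw [hcon] at hmemI
    simp only [Set.mem_empty_iff_false] at hmemI
    rw [ae_iff] at hmemI
    simp [measure_univ] at hmemI
  obtain ⟨a₀, ha₀⟩ := hne
  have hM₂0 : 0 ≤ M₂ := (abs_nonneg _).trans (hM₂ a₀ ha₀)
  set B : ℝ := ‖wbar‖ with hBdef
  have hB0 : 0 ≤ B := norm_nonneg _
  -- quantitative Taylor bounds
  have htwo : ∀ x ∈ I, |u x - u a₀ - u' a₀ * (x - a₀)| ≤ M₂ / 2 * (x - a₀) ^ 2 := by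
    intro x hx
    have h1 := taylor_lb hconv hu' hu'' hM₂ ha₀ hx
    have h2 := taylor_lb hconv (u := fun t => -u t) (u' := fun t => -u' t)
        (u'' := fun t => -u'' t)
        (fun t ht => (hu' t ht).neg) (fun t ht => (hu'' t ht).neg)
        (M₂ := M₂) (fun t ht => by simpa [abs_neg] using hM₂ t ht) ha₀ hx
    rw [abs_le]
    constructor <;> nlinarith
  have hu'd : ∀ x ∈ I, |u' x - u' a₀| ≤ M₂ * |x - a₀| := by
    intro x hx
    have := hconv.norm_image_sub_le_of_norm_hasDerivWithin_le hu''
      (fun y hy => by simpa using hM₂ y hy) ha₀ hx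
    simpa [Real.norm_eq_abs] using this
  set C : ℝ := |u a₀| + |u' a₀| * (1 + |a₀|) + M₂ / 2 * (1 + |a₀|) ^ 2 with hCdef
  have hC0 : 0 ≤ C := by positivity
  set C' : ℝ := |u' a₀| + M₂ * (1 + |a₀|) with hC'def
  have hC'0 : 0 ≤ C' := by positivity
  have key_u : ∀ x ∈ I, ∀ s : ℝ, 0 ≤ s → |x| ≤ s → |u x| ≤ C * (1 + s) ^ 2 := by
    intro x hx s hs hxs
    have hd : |x - a₀| ≤ (1 + |a₀|) * (1 + s) := by
      have := abs_sub x a₀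
      have hx' : |x| ≤ s := hxs
      nlinarith [abs_nonneg a₀]
    have hd2 : (x - a₀) ^ 2 ≤ ((1 + |a₀|) * (1 + s)) ^ 2 := by
      rw [← sq_abs (x - a₀)]
      exact pow_le_pow_left₀ (abs_nonneg _) hd 2
    have habs : |u x| ≤ |u a₀| + |u' a₀| * |x - a₀| + M₂ / 2 * (x - a₀) ^ 2 := by
      have h1 := htwo x hx
      have h2 := abs_add_le (u x - u a₀ - u' a₀ * (x - a₀)) (u a₀ + u' a₀ * (x - a₀))
      have h3 := abs_add_le (u a₀) (u' a₀ * (x - a₀))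
      rw [abs_mul] at h3
      have : u x = (u x - u a₀ - u' a₀ * (x - a₀)) + (u a₀ + u' a₀ * (x - a₀)) := by ring
      rw [this]
      calc |(u x - u a₀ - u' a₀ * (x - a₀)) + (u a₀ + u' a₀ * (x - a₀))|
          ≤ |u x - u a₀ - u' a₀ * (x - a₀)| + |u a₀ + u' a₀ * (x - a₀)| := h2
        _ ≤ M₂ / 2 * (x - a₀) ^ 2 + (|u a₀| + |u' a₀| * |x - a₀|) := by
            gcongr
        _ = |u a₀| + |u' a₀| * |x - a₀| + M₂ / 2 * (x - a₀) ^ 2 := by ring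
    have h1s : (1:ℝ) ≤ (1 + s) ^ 2 := by nlinarith
    rw [hCdef]
    have e1 : |u' a₀| * |x - a₀| ≤ |u' a₀| * ((1 + |a₀|) * (1 + s)) :=
      mul_le_mul_of_nonneg_left hd (abs_nonneg _)
    have e2 : M₂ / 2 * (x - a₀) ^ 2 ≤ M₂ / 2 * ((1 + |a₀|) * (1 + s)) ^ 2 :=
      mul_le_mul_of_nonneg_left hd2 (by positivity)
    nlinarith [abs_nonneg (u a₀), abs_nonneg (u' a₀), abs_nonneg a₀,
      mul_nonneg (mul_nonneg (abs_nonneg (u' a₀)) (by positivity : (0:ℝ) ≤ 1 + |a₀|)) hs,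
      mul_nonneg hM₂0 (sq_nonneg (1 + |a₀|))]
  have key_u' : ∀ x ∈ I, ∀ s : ℝ, 0 ≤ s → |x| ≤ s → |u' x| ≤ C' * (1 + s) := by
    intro x hx s hs hxs
    have hd : |x - a₀| ≤ (1 + |a₀|) * (1 + s) := by
      have := abs_sub x a₀
      nlinarith [abs_nonneg a₀]
    have h1 := hu'd x hx
    have h2 : |u' x| ≤ |u' a₀| + M₂ * |x - a₀| := by
      have := abs_add_le (u' x - u' a₀) (u' a₀)
      simp only [sub_add_cancel] at this
      linarith
    rw [hC'def]
    nlinarith [abs_nonneg (u' a₀), mul_le_mul_of_nonneg_left hd hM₂0,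
      mul_nonneg hM₂0 (by positivity : (0:ℝ) ≤ 1 + |a₀|)]
  -- basic integrability
  have iW2 : Integrable (fun w => (1 + ‖w‖) ^ 2) W := int_one_add_norm_sq hWm
  have iR2 : Integrable (fun r => (1 + ‖r‖) ^ 2) R := int_one_add_norm_sq hRm
  have iW1 : Integrable (fun w => 1 + ‖w‖) W := by
    refine iW2.mono' (continuous_const.add continuous_norm).aestronglyMeasurable ?_
    filter_upwards with w
    rw [Real.norm_eq_abs, abs_of_nonneg (by positivity)]
    nlinarith [norm_nonneg w]
  have iWid : Integrable (fun w : EuclideanSpace ℝ (Fin K) => w) W := by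
    have hn : Integrable (fun w : EuclideanSpace ℝ (Fin K) => ‖w‖) W := by
      refine iW2.mono' continuous_norm.aestronglyMeasurable ?_
      filter_upwards with x
      rw [Real.norm_eq_abs, abs_of_nonneg (norm_nonneg x)]
      nlinarith [norm_nonneg x]
    exact (integrable_norm_iff continuous_id.aestronglyMeasurable).1 hn
  have iWsub : Integrable (fun w => w - wbar) W := iWid.sub (integrable_const wbar)
  have hzero : (∫ w, (w - wbar) ∂W) = 0 := by
    rw [integral_sub iWid (integrable_const wbar), integral_const, probReal_univ, ← hwbar]
    simp
  have iΦ : Integrable (fun p : EuclideanSpace ℝ (Fin K) × EuclideanSpace ℝ (Fin K) =>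
      (1 + ‖p.1‖) ^ 2 * (1 + ‖p.2‖) ^ 2) (W.prod R) := iW2.mul_prod iR2
  have iΦR : Integrable (fun p : EuclideanSpace ℝ (Fin K) × EuclideanSpace ℝ (Fin K) =>
      (1 + ‖p.2‖) ^ 2) (W.prod R) := by
    simpa using (integrable_const (1:ℝ)).mul_prod iR2
  have iG_dom : Integrable (fun p : EuclideanSpace ℝ (Fin K) × EuclideanSpace ℝ (Fin K) =>
      (1 + ‖p.1‖) * (1 + ‖p.2‖) ^ 2) (W.prod R) := iW1.mul_prod iR2
  -- lift the second membership hypothesis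
  have hmem2 : ∀ᵐ p ∂(W.prod R), ((inner ℝ p.2 wbar : ℝ)) ∈ I := by
    rw [ae_iff] at hmemI' ⊢
    have hset : {p : EuclideanSpace ℝ (Fin K) × EuclideanSpace ℝ (Fin K) |
        ¬ ((inner ℝ p.2 wbar : ℝ)) ∈ I} =
        Set.univ ×ˢ {r | ¬ ((inner ℝ r wbar : ℝ)) ∈ I} := by
      ext p; simp [Set.mem_prod]
    rw [hset, Measure.prod_prod, hmemI', mul_zero]
  -- continuity facts
  have hcx : Continuous (fun p : EuclideanSpace ℝ (Fin K) × EuclideanSpace ℝ (Fin K) =>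
      (inner ℝ p.2 p.1 : ℝ)) := continuous_snd.inner continuous_fst
  have hca : Continuous (fun p : EuclideanSpace ℝ (Fin K) × EuclideanSpace ℝ (Fin K) =>
      (inner ℝ p.2 wbar : ℝ)) := continuous_snd.inner continuous_const
  have hcr : Continuous (fun r : EuclideanSpace ℝ (Fin K) => (inner ℝ r wbar : ℝ)) :=
    continuous_id.inner continuous_const
  have hcn : Continuous (fun p : EuclideanSpace ℝ (Fin K) × EuclideanSpace ℝ (Fin K) =>
      (inner ℝ p.2 (p.1 - wbar) : ℝ)) :=
    continuous_snd.inner (continuous_fst.sub continuous_const)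
  -- pointwise inner-product bounds
  have hbx : ∀ p : EuclideanSpace ℝ (Fin K) × EuclideanSpace ℝ (Fin K),
      |(inner ℝ p.2 p.1 : ℝ)| ≤ ‖p.1‖ * ‖p.2‖ := by
    intro p; rw [mul_comm]; exact abs_real_inner_le_norm _ _
  have hba : ∀ r : EuclideanSpace ℝ (Fin K), |(inner ℝ r wbar : ℝ)| ≤ B * ‖r‖ := by
    intro r; rw [mul_comm]; exact abs_real_inner_le_norm _ _
  have hbn : ∀ p : EuclideanSpace ℝ (Fin K) × EuclideanSpace ℝ (Fin K),
      |(inner ℝ p.2 (p.1 - wbar) : ℝ)| ≤ (1 + B) * ((1 + ‖p.1‖) * (1 + ‖p.2‖)) := by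
    intro p
    have h1 := abs_real_inner_le_norm p.2 (p.1 - wbar)
    have h2 : ‖p.1 - wbar‖ ≤ ‖p.1‖ + B := norm_sub_le _ _
    have h3 : ‖p.2‖ * ‖p.1 - wbar‖ ≤ ‖p.2‖ * (‖p.1‖ + B) :=
      mul_le_mul_of_nonneg_left h2 (norm_nonneg p.2)
    nlinarith [norm_nonneg p.1, norm_nonneg p.2, hB0,
      mul_nonneg hB0 (norm_nonneg p.1), mul_nonneg hB0 (norm_nonneg p.2),
      mul_nonneg (norm_nonneg p.1) (norm_nonneg p.2),
      mul_nonneg (mul_nonneg hB0 (norm_nonneg p.1)) (norm_nonneg p.2)]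
  -- a.e. strong measurability
  have asm_f : AEStronglyMeasurable
      (fun p : EuclideanSpace ℝ (Fin K) × EuclideanSpace ℝ (Fin K) =>
        u ((inner ℝ p.2 p.1 : ℝ))) (W.prod R) := aesm_comp hcx hImeas hucont hmemI
  have asm_u2 : AEStronglyMeasurable
      (fun p : EuclideanSpace ℝ (Fin K) × EuclideanSpace ℝ (Fin K) =>
        u ((inner ℝ p.2 wbar : ℝ))) (W.prod R) := aesm_comp hca hImeas hucont hmem2
  have asm_u'2 : AEStronglyMeasurable
      (fun p : EuclideanSpace ℝ (Fin K) × EuclideanSpace ℝ (Fin K) =>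
        u' ((inner ℝ p.2 wbar : ℝ))) (W.prod R) := aesm_comp hca hImeas hu'cont hmem2
  have asm_ur : AEStronglyMeasurable (fun r : EuclideanSpace ℝ (Fin K) =>
      u ((inner ℝ r wbar : ℝ))) R := aesm_comp hcr hImeas hucont hmemI'
  -- integrability of the main pieces
  have hfi : Integrable (fun p : EuclideanSpace ℝ (Fin K) × EuclideanSpace ℝ (Fin K) =>
      u ((inner ℝ p.2 p.1 : ℝ))) (W.prod R) := by
    refine (iΦ.const_mul C).mono' asm_f ?_
    filter_upwards [hmemI] with p hp
    rw [Real.norm_eq_abs]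
    have h1 := key_u _ hp (‖p.1‖ * ‖p.2‖) (by positivity) (hbx p)
    refine h1.trans ?_
    have h2 : (1 + ‖p.1‖ * ‖p.2‖) ^ 2 ≤ (1 + ‖p.1‖) ^ 2 * (1 + ‖p.2‖) ^ 2 := by
      nlinarith [norm_nonneg p.1, norm_nonneg p.2, mul_nonneg (norm_nonneg p.1) (norm_nonneg p.2)]
    exact mul_le_mul_of_nonneg_left h2 hC0
  have hU2i : Integrable (fun p : EuclideanSpace ℝ (Fin K) × EuclideanSpace ℝ (Fin K) =>
      u ((inner ℝ p.2 wbar : ℝ))) (W.prod R) := by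
    refine (iΦR.const_mul (C * (1 + B) ^ 2)).mono' asm_u2 ?_
    filter_upwards [hmem2] with p hp
    rw [Real.norm_eq_abs]
    have h1 := key_u _ hp (B * ‖p.2‖) (by positivity) (hba p.2)
    refine h1.trans ?_
    have e1 : 1 + B * ‖p.2‖ ≤ (1 + B) * (1 + ‖p.2‖) := by nlinarith [norm_nonneg p.2]
    have e2 : (1 + B * ‖p.2‖) ^ 2 ≤ ((1 + B) * (1 + ‖p.2‖)) ^ 2 :=
      pow_le_pow_left₀ (by positivity) e1 2
    calc C * (1 + B * ‖p.2‖) ^ 2 ≤ C * (((1 + B) * (1 + ‖p.2‖)) ^ 2) :=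
          mul_le_mul_of_nonneg_left e2 hC0
      _ = C * (1 + B) ^ 2 * (1 + ‖p.2‖) ^ 2 := by ring
  have hGi : Integrable (fun p : EuclideanSpace ℝ (Fin K) × EuclideanSpace ℝ (Fin K) =>
      u' ((inner ℝ p.2 wbar : ℝ)) * (inner ℝ p.2 (p.1 - wbar) : ℝ)) (W.prod R) := by
    refine (iG_dom.const_mul (C' * (1 + B) ^ 2)).mono'
      (asm_u'2.mul hcn.aestronglyMeasurable) ?_
    filter_upwards [hmem2] with p hp
    rw [Real.norm_eq_abs, abs_mul]
    have h1 := key_u' _ hp (B * ‖p.2‖) (by positivity) (hba p.2)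
    have e1 : 1 + B * ‖p.2‖ ≤ (1 + B) * (1 + ‖p.2‖) := by nlinarith [norm_nonneg p.2]
    have h1' : |u' ((inner ℝ p.2 wbar : ℝ))| ≤ C' * ((1 + B) * (1 + ‖p.2‖)) :=
      h1.trans (mul_le_mul_of_nonneg_left e1 hC'0)
    have h2 := hbn p
    calc |u' ((inner ℝ p.2 wbar : ℝ))| * |(inner ℝ p.2 (p.1 - wbar) : ℝ)|
        ≤ (C' * ((1 + B) * (1 + ‖p.2‖))) * ((1 + B) * ((1 + ‖p.1‖) * (1 + ‖p.2‖))) := by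
          apply mul_le_mul h1' h2 (abs_nonneg _)
          positivity
      _ = C' * (1 + B) ^ 2 * ((1 + ‖p.1‖) * (1 + ‖p.2‖) ^ 2) := by ring
  have hQi : Integrable (fun p : EuclideanSpace ℝ (Fin K) × EuclideanSpace ℝ (Fin K) =>
      ((inner ℝ p.2 (p.1 - wbar) : ℝ)) ^ 2) (W.prod R) := by
    refine (iΦ.const_mul ((1 + B) ^ 2)).mono' (hcn.pow 2).aestronglyMeasurable ?_
    filter_upwards with p
    rw [Real.norm_eq_abs, abs_of_nonneg (sq_nonneg _)]
    have h2 := hbn p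
    calc ((inner ℝ p.2 (p.1 - wbar) : ℝ)) ^ 2 = |(inner ℝ p.2 (p.1 - wbar) : ℝ)| ^ 2 :=
          (sq_abs _).symm
      _ ≤ ((1 + B) * ((1 + ‖p.1‖) * (1 + ‖p.2‖))) ^ 2 :=
          pow_le_pow_left₀ (abs_nonneg _) h2 2
      _ = (1 + B) ^ 2 * ((1 + ‖p.1‖) ^ 2 * (1 + ‖p.2‖) ^ 2) := by ring
  have iuc : Integrable (fun r : EuclideanSpace ℝ (Fin K) => u ((inner ℝ r wbar : ℝ))) R := by
    refine (iR2.const_mul (C * (1 + B) ^ 2)).mono' asm_ur ?_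
    filter_upwards [hmemI'] with r hr
    rw [Real.norm_eq_abs]
    have h1 := key_u _ hr (B * ‖r‖) (by positivity) (hba r)
    refine h1.trans ?_
    have e1 : 1 + B * ‖r‖ ≤ (1 + B) * (1 + ‖r‖) := by nlinarith [norm_nonneg r]
    have e2 : (1 + B * ‖r‖) ^ 2 ≤ ((1 + B) * (1 + ‖r‖)) ^ 2 :=
      pow_le_pow_left₀ (by positivity) e1 2
    calc C * (1 + B * ‖r‖) ^ 2 ≤ C * (((1 + B) * (1 + ‖r‖)) ^ 2) :=
          mul_le_mul_of_nonneg_left e2 hC0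
      _ = C * (1 + B) ^ 2 * (1 + ‖r‖) ^ 2 := by ring
  -- integrability of the quadratic form
  set S : ℝ := ∑ i, ∑ j, |SigW i j| with hSdef
  have iq : Integrable (fun r : EuclideanSpace ℝ (Fin K) =>
      ∑ i, ∑ j, r i * SigW i j * r j) R := by
    have hcont : Continuous (fun r : EuclideanSpace ℝ (Fin K) =>
        ∑ i, ∑ j, r i * SigW i j * r j) := by
      apply continuous_finset_sum
      intro i _
      apply continuous_finset_sum
      intro j _
      exact (((EuclideanSpace.proj (𝕜 := ℝ) i).continuous.mul continuous_const).mul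
        (EuclideanSpace.proj (𝕜 := ℝ) j).continuous)
    refine (iR2.const_mul S).mono' hcont.aestronglyMeasurable ?_
    filter_upwards with r
    rw [Real.norm_eq_abs]
    have hterm : ∀ i j : Fin K, |r i * SigW i j * r j| ≤ |SigW i j| * (1 + ‖r‖) ^ 2 := by
      intro i j
      rw [abs_mul, abs_mul]
      have h1 := abs_coord_le r i
      have h2 := abs_coord_le r j
      have hn := norm_nonneg r
      have e1 : |r i| * |SigW i j| * |r j| ≤ ‖r‖ * |SigW i j| * ‖r‖ := by
        apply mul_le_mul (mul_le_mul h1 le_rfl (abs_nonneg _) hn) h2 (abs_nonneg _)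
        positivity
      refine e1.trans ?_
      have e2 : ‖r‖ ^ 2 ≤ (1 + ‖r‖) ^ 2 := by nlinarith
      nlinarith [abs_nonneg (SigW i j), mul_nonneg (abs_nonneg (SigW i j)) hn]
    calc |∑ i, ∑ j, r i * SigW i j * r j| ≤ ∑ i, |∑ j, r i * SigW i j * r j| :=
          Finset.abs_sum_le_sum_abs _ _
      _ ≤ ∑ i, ∑ j, |r i * SigW i j * r j| :=
          Finset.sum_le_sum fun i _ => Finset.abs_sum_le_sum_abs _ _
      _ ≤ ∑ i, ∑ j, |SigW i j| * (1 + ‖r‖) ^ 2 :=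
          Finset.sum_le_sum fun i _ => Finset.sum_le_sum fun j _ => hterm i j
      _ = S * (1 + ‖r‖) ^ 2 := by rw [hSdef]; simp_rw [← Finset.sum_mul]
  -- per-r integrability over W
  have i1r : ∀ r : EuclideanSpace ℝ (Fin K),
      Integrable (fun w => (inner ℝ r (w - wbar) : ℝ)) W := by
    intro r
    have := (innerSL ℝ r).integrable_comp iWsub
    simpa using this
  have hzero_r : ∀ r : EuclideanSpace ℝ (Fin K),
      (∫ w, (inner ℝ r (w - wbar) : ℝ) ∂W) = 0 := by
    intro r
    rw [integral_inner iWsub r, hzero, inner_zero_right]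
  have icoord : ∀ i j : Fin K,
      Integrable (fun w : EuclideanSpace ℝ (Fin K) =>
        (w i - wbar i) * (w j - wbar j)) W := by
    intro i j
    refine (iW2.const_mul ((1 + B) ^ 2)).mono'
      ((((EuclideanSpace.proj (𝕜 := ℝ) i).continuous.sub continuous_const).mul
        ((EuclideanSpace.proj (𝕜 := ℝ) j).continuous.sub continuous_const)).aestronglyMeasurable)
      ?_
    filter_upwards with w
    rw [Real.norm_eq_abs, abs_mul]
    have h1 : |w i - wbar i| ≤ (1 + B) * (1 + ‖w‖) := by
      have := abs_sub (w i) (wbar i)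
      have hi1 := abs_coord_le w i
      have hi2 := abs_coord_le wbar i
      nlinarith [norm_nonneg w, hB0, mul_nonneg hB0 (norm_nonneg w)]
    have h2 : |w j - wbar j| ≤ (1 + B) * (1 + ‖w‖) := by
      have := abs_sub (w j) (wbar j)
      have hj1 := abs_coord_le w j
      have hj2 := abs_coord_le wbar j
      nlinarith [norm_nonneg w, hB0, mul_nonneg hB0 (norm_nonneg w)]
    calc |w i - wbar i| * |w j - wbar j| ≤ ((1 + B) * (1 + ‖w‖)) * ((1 + B) * (1 + ‖w‖)) :=
          mul_le_mul h1 h2 (abs_nonneg _) (by positivity)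
      _ = (1 + B) ^ 2 * (1 + ‖w‖) ^ 2 := by ring
  have i2r : ∀ r : EuclideanSpace ℝ (Fin K),
      Integrable (fun w => ((inner ℝ r (w - wbar) : ℝ)) ^ 2) W := by
    intro r
    refine (iW2.const_mul ((‖r‖ * (1 + B)) ^ 2)).mono'
      (((continuous_const.inner (continuous_id.sub continuous_const)).pow 2).aestronglyMeasurable)
      ?_
    filter_upwards with w
    rw [Real.norm_eq_abs, abs_of_nonneg (sq_nonneg _)]
    have h1 := abs_real_inner_le_norm r (w - wbar)
    have h2 : ‖w - wbar‖ ≤ ‖w‖ + B := norm_sub_le _ _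
    have h3 : |(inner ℝ r (w - wbar) : ℝ)| ≤ ‖r‖ * (1 + B) * (1 + ‖w‖) := by
      have h4 : ‖r‖ * ‖w - wbar‖ ≤ ‖r‖ * (‖w‖ + B) :=
        mul_le_mul_of_nonneg_left h2 (norm_nonneg r)
      nlinarith [norm_nonneg r, norm_nonneg w, hB0, mul_nonneg (norm_nonneg r) hB0,
        mul_nonneg (norm_nonneg r) (norm_nonneg w)]
    calc ((inner ℝ r (w - wbar) : ℝ)) ^ 2 = |(inner ℝ r (w - wbar) : ℝ)| ^ 2 := (sq_abs _).symm
      _ ≤ (‖r‖ * (1 + B) * (1 + ‖w‖)) ^ 2 := pow_le_pow_left₀ (abs_nonneg _) h3 2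
      _ = (‖r‖ * (1 + B)) ^ 2 * (1 + ‖w‖) ^ 2 := by ring
  -- the quadratic form identity
  have hq : ∀ r : EuclideanSpace ℝ (Fin K),
      (∫ w, ((inner ℝ r (w - wbar) : ℝ)) ^ 2 ∂W) = ∑ i, ∑ j, r i * SigW i j * r j := by
    intro r
    have hexp : ∀ w : EuclideanSpace ℝ (Fin K), ((inner ℝ r (w - wbar) : ℝ)) ^ 2
        = ∑ i, ∑ j, (r i * r j) * ((w i - wbar i) * (w j - wbar j)) := by
      intro w
      have hin : (inner ℝ r (w - wbar) : ℝ) = ∑ i, r i * (w i - wbar i) := by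
        simp [PiLp.inner_apply, RCLike.inner_apply, conj_trivial, mul_comm]
      rw [hin, sq, Finset.sum_mul_sum]
      exact Finset.sum_congr rfl fun i _ => Finset.sum_congr rfl fun j _ => by ring
    simp_rw [hexp]
    rw [integral_finset_sum _ (fun i _ =>
      integrable_finset_sum _ (fun j _ => (icoord i j).const_mul _))]
    refine Finset.sum_congr rfl fun i _ => ?_
    rw [integral_finset_sum _ (fun j _ => (icoord i j).const_mul _)]
    refine Finset.sum_congr rfl fun j _ => ?_
    rw [integral_const_mul, ← hSigW i j]
    ring
  -- the inner (W-)integral of the Taylor minorant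
  have hinner : ∀ r : EuclideanSpace ℝ (Fin K),
      (∫ w, (u ((inner ℝ r wbar : ℝ)) + u' ((inner ℝ r wbar : ℝ)) * (inner ℝ r (w - wbar) : ℝ)
        - M₂ / 2 * ((inner ℝ r (w - wbar) : ℝ)) ^ 2) ∂W)
      = u ((inner ℝ r wbar : ℝ)) - M₂ / 2 * (∑ i, ∑ j, r i * SigW i j * r j) := by
    intro r
    have ia : Integrable (fun w : EuclideanSpace ℝ (Fin K) =>
        u ((inner ℝ r wbar : ℝ)) + u' ((inner ℝ r wbar : ℝ)) * (inner ℝ r (w - wbar) : ℝ)) W :=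
      (integrable_const _).add ((i1r r).const_mul _)
    have ib : Integrable (fun w : EuclideanSpace ℝ (Fin K) =>
        M₂ / 2 * ((inner ℝ r (w - wbar) : ℝ)) ^ 2) W := (i2r r).const_mul _
    rw [integral_sub ia ib,
      integral_add (integrable_const _) ((i1r r).const_mul _),
      integral_const_mul, integral_const_mul, integral_const, hzero_r r, hq r,
      probReal_univ]
    simp
  -- the Taylor minorant on the product space
  have hh : Integrable (fun p : EuclideanSpace ℝ (Fin K) × EuclideanSpace ℝ (Fin K) =>
      u ((inner ℝ p.2 wbar : ℝ)) + u' ((inner ℝ p.2 wbar : ℝ)) * (inner ℝ p.2 (p.1 - wbar) : ℝ)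
        - M₂ / 2 * ((inner ℝ p.2 (p.1 - wbar) : ℝ)) ^ 2) (W.prod R) :=
    (hU2i.add hGi).sub (hQi.const_mul _)
  have hle : ∀ᵐ p ∂(W.prod R),
      u ((inner ℝ p.2 wbar : ℝ)) + u' ((inner ℝ p.2 wbar : ℝ)) * (inner ℝ p.2 (p.1 - wbar) : ℝ)
        - M₂ / 2 * ((inner ℝ p.2 (p.1 - wbar) : ℝ)) ^ 2 ≤ u ((inner ℝ p.2 p.1 : ℝ)) := by
    filter_upwards [hmemI, hmem2] with p hx ha
    have hsub : (inner ℝ p.2 (p.1 - wbar) : ℝ) = (inner ℝ p.2 p.1 : ℝ) - (inner ℝ p.2 wbar : ℝ) :=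
      inner_sub_right _ _ _
    rw [hsub]
    exact taylor_lb hconv hu' hu'' hM₂ ha hx
  have hmain := integral_mono_ae hh hfi hle
  refine le_trans (le_of_eq ?_) hmain
  rw [integral_prod_symm _ hh]
  have hre : (fun r : EuclideanSpace ℝ (Fin K) =>
      ∫ w, (u ((inner ℝ r wbar : ℝ)) + u' ((inner ℝ r wbar : ℝ)) * (inner ℝ r (w - wbar) : ℝ)
        - M₂ / 2 * ((inner ℝ r (w - wbar) : ℝ)) ^ 2) ∂W)
      = fun r : EuclideanSpace ℝ (Fin K) =>
        u ((inner ℝ r wbar : ℝ)) - M₂ / 2 * (∑ i, ∑ j, r i * SigW i j * r j) :=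
    funext hinner
  calc (∫ r, u ((inner ℝ r wbar : ℝ)) ∂(R))
        - M₂ / 2 * ∫ r, (∑ i, ∑ j, r i * SigW i j * r j) ∂(R)
      = ∫ r, (u ((inner ℝ r wbar : ℝ))
          - M₂ / 2 * (∑ i, ∑ j, r i * SigW i j * r j)) ∂(R) := by
        rw [integral_sub iuc (iq.const_mul _), integral_const_mul]
    _ = ∫ r, ∫ w, (u ((inner ℝ r wbar : ℝ))
          + u' ((inner ℝ r wbar : ℝ)) * (inner ℝ r (w - wbar) : ℝ)
          - M₂ / 2 * ((inner ℝ r (w - wbar) : ℝ)) ^ 2) ∂W ∂(R) := by rw [hre]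
end
end

section
/- Let K ≥ 1, let δ > 0, and let Σ and Σ' be real symmetric K × K matrices with Σ ⪰ δI and Σ' ⪰ δI (i.e., Σ − δI and Σ' − δI are positive semidefinite). Then ‖Σ^{1/2} − Σ'^{1/2}‖_F ≤ (1/(2√δ)) · ‖Σ − Σ'‖_F, where M^{1/2} denotes the unique positive semidefinite square root and ‖·‖_F the Frobenius norm. -/
open Matrix

set_option maxHeartbeats 1000000

noncomputable section

/-- The Frobenius norm of a real matrix. -/
noncomputable def frobNorm {K : ℕ} (M : Matrix (Fin K) (Fin K) ℝ) : ℝ :=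
  Real.sqrt (∑ i, ∑ j, (M i j) ^ 2)

open scoped ComplexOrder in
/-- The positive semidefinite square root of a positive semidefinite matrix
(the definition `Matrix.PosSemidef.sqrt` of the older Mathlib, since removed). -/
noncomputable def Matrix.PosSemidef.sqrt {n : Type*} [Fintype n] [DecidableEq n]
    {𝕜 : Type*} [RCLike 𝕜] {A : Matrix n n 𝕜} (hA : PosSemidef A) : Matrix n n 𝕜 :=
  hA.1.eigenvectorUnitary.1 * diagonal ((↑) ∘ (√·) ∘ hA.1.eigenvalues) *
  (star hA.1.eigenvectorUnitary : Matrix n n 𝕜)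

lemma trace_nonneg_of_posSemidef {K : ℕ} {M : Matrix (Fin K) (Fin K) ℝ}
    (hM : M.PosSemidef) : 0 ≤ M.trace := by
  rw [Matrix.trace]
  refine Finset.sum_nonneg fun i _ => ?_
  have := hM.dotProduct_mulVec_nonneg (Pi.single i 1)
  simpa [dotProduct, Matrix.mulVec, Pi.single_apply] using this

lemma eigenvalues_ge {K : ℕ} {δ : ℝ} {M : Matrix (Fin K) (Fin K) ℝ}
    (hM : M.IsHermitian) (h : (M - δ • (1 : Matrix (Fin K) (Fin K) ℝ)).PosSemidef)
    (i : Fin K) : δ ≤ hM.eigenvalues i := by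
  set v : Fin K → ℝ := ⇑(hM.eigenvectorBasis i) with hv
  have hnorm : ‖hM.eigenvectorBasis i‖ = 1 := hM.eigenvectorBasis.orthonormal.1 i
  have hvv : dotProduct v v = 1 := by
    have h2 : (inner ℝ (hM.eigenvectorBasis i) (hM.eigenvectorBasis i) : ℝ) = 1 := by
      rw [real_inner_self_eq_norm_sq, hnorm]; norm_num
    rw [← h2, EuclideanSpace.inner_eq_star_dotProduct]
    simp [hv]
  have heig : dotProduct v (M *ᵥ v) = hM.eigenvalues i := by
    rw [hv, hM.mulVec_eigenvectorBasis]
    simp only [dotProduct_smul, smul_eq_mul]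
    rw [← hv, hvv, mul_one]
  have := h.dotProduct_mulVec_nonneg v
  have hstar : star v = v := by simp
  rw [hstar, Matrix.sub_mulVec, dotProduct_sub, Matrix.smul_mulVec,
    Matrix.one_mulVec, dotProduct_smul, smul_eq_mul, hvv, mul_one, heig] at this
  linarith

lemma sqrt_sub_smul_posSemidef {K : ℕ} {δ : ℝ} (hδ : 0 ≤ δ)
    {M : Matrix (Fin K) (Fin K) ℝ} (hM : M.PosSemidef)
    (h : (M - δ • (1 : Matrix (Fin K) (Fin K) ℝ)).PosSemidef) :
    (hM.sqrt - Real.sqrt δ • (1 : Matrix (Fin K) (Fin K) ℝ)).PosSemidef := by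
  classical
  set U : Matrix (Fin K) (Fin K) ℝ := (hM.1.eigenvectorUnitary : Matrix (Fin K) (Fin K) ℝ)
  have hUU : U * star U = 1 := Matrix.mem_unitaryGroup_iff.mp hM.1.eigenvectorUnitary.2
  have hδ1 : Real.sqrt δ • (1 : Matrix (Fin K) (Fin K) ℝ)
      = U * (Real.sqrt δ • (1 : Matrix (Fin K) (Fin K) ℝ)) * star U := by
    rw [Matrix.mul_smul, Matrix.mul_one, Matrix.smul_mul, hUU]
  have hsqrt : hM.sqrt = U * Matrix.diagonal ((↑) ∘ Real.sqrt ∘ hM.1.eigenvalues) * star U := rfl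
  rw [hsqrt, hδ1, ← Matrix.sub_mul, ← Matrix.mul_sub]
  have hUstar : star U = Uᴴ := rfl
  rw [hUstar]
  apply Matrix.PosSemidef.mul_mul_conjTranspose_same
  have h1 : Real.sqrt δ • (1 : Matrix (Fin K) (Fin K) ℝ)
      = Matrix.diagonal (fun _ => Real.sqrt δ) := by
    ext i j
    by_cases hij : i = j <;> simp [Matrix.one_apply, hij]
  rw [h1, Matrix.diagonal_sub]
  refine Matrix.posSemidef_diagonal_iff.mpr fun i => ?_
  have := eigenvalues_ge hM.1 h i
  simpa using sub_nonneg.mpr (Real.sqrt_le_sqrt this)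


lemma trace_conj_bound {K : ℕ} (D N : Matrix (Fin K) (Fin K) ℝ) (hD : Dᴴ = D) (s : ℝ)
    (hN : (N - s • (1 : Matrix (Fin K) (Fin K) ℝ)).PosSemidef) :
    s * (D * D).trace ≤ (D * N * D).trace := by
  have hpsd : (D * (N - s • 1) * Dᴴ).PosSemidef := hN.mul_mul_conjTranspose_same D
  rw [hD] at hpsd
  have ht := trace_nonneg_of_posSemidef hpsd
  have hexp : D * (N - s • 1) * D = D * N * D - s • (D * D) := by
    rw [Matrix.mul_sub, Matrix.mul_smul, Matrix.mul_one, Matrix.sub_mul, Matrix.smul_mul]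
  rw [hexp, Matrix.trace_sub, Matrix.trace_smul, smul_eq_mul] at ht
  linarith

lemma frob_aux {K : ℕ} (A B M : Matrix (Fin K) (Fin K) ℝ) (s : ℝ) (hs0 : 0 < s)
    (hDH : (A - B)ᴴ = A - B) (hMH : Mᴴ = M)
    (hkey : M = A * (A - B) + (A - B) * B)
    (hApsd : (A - s • (1 : Matrix (Fin K) (Fin K) ℝ)).PosSemidef)
    (hBpsd : (B - s • (1 : Matrix (Fin K) (Fin K) ℝ)).PosSemidef) :
    frobNorm (A - B) ≤ (1 / (2 * s)) * frobNorm M := by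
  classical
  set D : Matrix (Fin K) (Fin K) ℝ := A - B with hDdef
  have hDsymm : ∀ i j, D j i = D i j := fun i j => by
    have := congrFun (congrFun hDH i) j
    simpa [Matrix.conjTranspose_apply] using this
  have hMsymm : ∀ i j, M j i = M i j := fun i j => by
    have := congrFun (congrFun hMH i) j
    simpa [Matrix.conjTranspose_apply] using this
  have hA' : s * (D * D).trace ≤ (D * A * D).trace := trace_conj_bound D A hDH _ hApsd
  have hB' : s * (D * D).trace ≤ (D * B * D).trace := trace_conj_bound D B hDH _ hBpsd
  have htraceM : (D * M).trace = (D * A * D).trace + (D * B * D).trace := by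
    rw [hkey, Matrix.mul_add, Matrix.trace_add]
    congr 1
    · rw [← Matrix.mul_assoc]
    · rw [Matrix.trace_mul_comm D (D * B), Matrix.mul_assoc]
  have hlow : 2 * s * (D * D).trace ≤ (D * M).trace := by
    rw [htraceM]; linarith
  have hDD : (D * D).trace = ∑ i, ∑ j, (D i j) ^ 2 := by
    rw [Matrix.trace]
    refine Finset.sum_congr rfl fun i _ => ?_
    rw [Matrix.diag_apply, Matrix.mul_apply]
    exact Finset.sum_congr rfl fun j _ => by rw [hDsymm i j]; ring
  have hDM : (D * M).trace = ∑ i, ∑ j, D i j * M i j := by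
    rw [Matrix.trace]
    refine Finset.sum_congr rfl fun i _ => ?_
    rw [Matrix.diag_apply, Matrix.mul_apply]
    exact Finset.sum_congr rfl fun j _ => by rw [hMsymm i j]
  set x : ℝ := frobNorm D with hx
  set y : ℝ := frobNorm M with hy
  have hDsum : ∑ i, ∑ j, (D i j) ^ 2 = x ^ 2 := by
    rw [hx, frobNorm, Real.sq_sqrt]
    positivity
  have hMsum : ∑ i, ∑ j, (M i j) ^ 2 = y ^ 2 := by
    rw [hy, frobNorm, Real.sq_sqrt]
    positivity
  have hx0 : 0 ≤ x := Real.sqrt_nonneg _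
  have hy0 : 0 ≤ y := Real.sqrt_nonneg _
  have hCS : ((D * M).trace) ^ 2 ≤ x ^ 2 * y ^ 2 := by
    rw [hDM, ← hDsum, ← hMsum]
    have := Finset.sum_mul_sq_le_sq_mul_sq (Finset.univ : Finset (Fin K × Fin K))
      (fun p => D p.1 p.2) (fun p => M p.1 p.2)
    simpa [Fintype.sum_prod_type] using this
  have htr0 : 0 ≤ (D * M).trace := by
    have h0' : 0 ≤ (D * D).trace := by rw [hDD, hDsum]; positivity
    nlinarith
  have hCS' : (D * M).trace ≤ x * y := by
    calc (D * M).trace = Real.sqrt ((D * M).trace ^ 2) := (Real.sqrt_sq htr0).symm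
    _ ≤ Real.sqrt (x ^ 2 * y ^ 2) := Real.sqrt_le_sqrt hCS
    _ = x * y := by rw [← mul_pow, Real.sqrt_sq (mul_nonneg hx0 hy0)]
  have hmain : 2 * s * x ^ 2 ≤ x * y := by
    calc 2 * s * x ^ 2 = 2 * s * (D * D).trace := by rw [hDD, hDsum]
    _ ≤ (D * M).trace := hlow
    _ ≤ x * y := hCS'
  rcases eq_or_lt_of_le hx0 with h0 | h0
  · rw [← h0]
    positivity
  · rw [div_mul_eq_mul_div, one_mul, le_div_iff₀ (by positivity)]
    have h' : x * (2 * s) * x ≤ y * x := by nlinarith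
    exact le_of_mul_le_mul_right h' h0

lemma Matrix.PosSemidef.posSemidef_sqrt {K : ℕ} {M : Matrix (Fin K) (Fin K) ℝ}
    (hM : M.PosSemidef) : hM.sqrt.PosSemidef := by
  have h := sqrt_sub_smul_posSemidef (le_refl (0:ℝ)) hM (by simpa using hM)
  simpa using h

lemma Matrix.PosSemidef.sq_sqrt {K : ℕ} {M : Matrix (Fin K) (Fin K) ℝ}
    (hM : M.PosSemidef) : hM.sqrt ^ 2 = M := by
  have hUU : star (hM.1.eigenvectorUnitary : Matrix (Fin K) (Fin K) ℝ) * hM.1.eigenvectorUnitary = 1 :=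
    Matrix.mem_unitaryGroup_iff'.mp hM.1.eigenvectorUnitary.2
  have hD : diagonal ((RCLike.ofReal : ℝ → ℝ) ∘ (√·) ∘ hM.1.eigenvalues) * diagonal ((RCLike.ofReal : ℝ → ℝ) ∘ (√·) ∘ hM.1.eigenvalues)
      = diagonal ((RCLike.ofReal : ℝ → ℝ) ∘ hM.1.eigenvalues) := by
    rw [diagonal_mul_diagonal]
    congr 1; funext i
    simp [Real.mul_self_sqrt (hM.eigenvalues_nonneg i)]
  conv_rhs => rw [hM.1.spectral_theorem, Unitary.conjStarAlgAut_apply]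
  rw [pow_two, Matrix.PosSemidef.sqrt]
  simp only [Matrix.mul_assoc]
  rw [← Matrix.mul_assoc (star _) _ (diagonal _ * _), hUU, Matrix.one_mul, ← Matrix.mul_assoc _ _ (star _), hD]

theorem stmt_13 {K : ℕ} (hK : 1 ≤ K) (δ : ℝ) (hδ : 0 < δ)
    (SigA SigB : Matrix (Fin K) (Fin K) ℝ)
    (h1 : (SigA - δ • (1 : Matrix (Fin K) (Fin K) ℝ)).PosSemidef)
    (h2 : (SigB - δ • (1 : Matrix (Fin K) (Fin K) ℝ)).PosSemidef)
    (hSigA : SigA.PosSemidef) (hSigB : SigB.PosSemidef) :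
    frobNorm (hSigA.sqrt - hSigB.sqrt) ≤ (1 / (2 * Real.sqrt δ)) * frobNorm (SigA - SigB) := by
  refine frob_aux hSigA.sqrt hSigB.sqrt (SigA - SigB) (Real.sqrt δ) (Real.sqrt_pos.mpr hδ)
    ?_ ?_ ?_ (sqrt_sub_smul_posSemidef hδ.le hSigA h1) (sqrt_sub_smul_posSemidef hδ.le hSigB h2)
  · exact (hSigA.posSemidef_sqrt.1.sub hSigB.posSemidef_sqrt.1)
  · exact (hSigA.1.sub hSigB.1)
  · rw [Matrix.mul_sub, Matrix.sub_mul, ← pow_two, ← pow_two, hSigA.sq_sqrt, hSigB.sq_sqrt]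
    abel
end
end

section
/- Let K ≥ 1, let r₁, …, r_n ∈ ℝ^K, let R̂ := (1/n) ∑_{i=1}^n δ_{r_i} be the empirical measure, let ε ≥ 0, and let w ∈ ℝ^K. Then the supremum, over all Borel probability measures R on ℝ^K with finite first moment satisfying W₁(R, R̂) ≤ ε, of ∫ (−⟨r,w⟩) dR(r), equals ∫ (−⟨r,w⟩) dR̂(r) + ε‖w‖, where ‖·‖ and ⟨·,·⟩ are the Euclidean norm and inner product. -/
open MeasureTheory ENNReal

noncomputable section

/-- The empirical measure of the sample `r₁, …, r_n`. -/
noncomputable def empiricalMeasure {K : ℕ} (n : ℕ) (r : Fin n → EuclideanSpace ℝ (Fin K)) :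
    Measure (EuclideanSpace ℝ (Fin K)) :=
  (n : ℝ≥0∞)⁻¹ • ∑ i : Fin n, Measure.dirac (r i)

variable {K n : ℕ}

lemma lintegral_empirical (r : Fin n → EuclideanSpace ℝ (Fin K))
    {h : EuclideanSpace ℝ (Fin K) → ℝ≥0∞} (hh : Measurable h) :
    ∫⁻ x, h x ∂(empiricalMeasure n r) = (n : ℝ≥0∞)⁻¹ * ∑ i : Fin n, h (r i) := by
  rw [empiricalMeasure, lintegral_smul_measure, lintegral_finset_sum_measure]
  simp [lintegral_dirac' _ hh]

lemma empirical_moment (hn : 1 ≤ n) (r : Fin n → EuclideanSpace ℝ (Fin K)) :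
    (∫⁻ x, (‖x‖₊ : ℝ≥0∞) ∂(empiricalMeasure n r)) < ⊤ := by
  rw [lintegral_empirical r (by fun_prop)]
  refine ENNReal.mul_lt_top ?_ ?_
  · exact ENNReal.inv_lt_top.mpr (by exact_mod_cast Nat.pos_of_ne_zero (by omega))
  · exact ENNReal.sum_lt_top.mpr fun i _ => ENNReal.coe_lt_top

theorem empirical_prob (hn : 1 ≤ n) (r : Fin n → EuclideanSpace ℝ (Fin K)) :
    IsProbabilityMeasure (empiricalMeasure n r) := by
  constructor
  rw [empiricalMeasure]
  simp [Measure.smul_apply, Measure.finset_sum_apply]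
  exact ENNReal.inv_mul_cancel (Nat.cast_ne_zero.mpr (by omega)) (by simp)

lemma integrable_neg_inner (w : EuclideanSpace ℝ (Fin K))
    (μ : Measure (EuclideanSpace ℝ (Fin K)))
    (hμ : (∫⁻ x, (‖x‖₊ : ℝ≥0∞) ∂μ) < ⊤) :
    Integrable (fun x => -(inner ℝ x w : ℝ)) μ := by
  refine ⟨((continuous_id.inner (𝕜 := ℝ) continuous_const).neg).aestronglyMeasurable, ?_⟩
  rw [HasFiniteIntegral]
  calc ∫⁻ x, (‖-(inner ℝ x w : ℝ)‖₊ : ℝ≥0∞) ∂μ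
      ≤ ∫⁻ x, (‖w‖₊ : ℝ≥0∞) * ‖x‖₊ ∂μ := by
        refine lintegral_mono fun x => ?_
        rw [← ENNReal.coe_mul]
        apply ENNReal.coe_le_coe.mpr
        rw [← NNReal.coe_le_coe]
        push_cast
        rw [norm_neg]
        calc ‖(inner ℝ x w : ℝ)‖ ≤ ‖x‖ * ‖w‖ := norm_inner_le_norm x w
        _ = ‖w‖ * ‖x‖ := mul_comm _ _
    _ = (‖w‖₊ : ℝ≥0∞) * ∫⁻ x, (‖x‖₊ : ℝ≥0∞) ∂μ := lintegral_const_mul _ (by fun_prop)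
    _ < ⊤ := ENNReal.mul_lt_top ENNReal.coe_lt_top hμ

lemma upper_bound (hn : 1 ≤ n) (r : Fin n → EuclideanSpace ℝ (Fin K)) (ε : ℝ) (hε : 0 ≤ ε)
    (w : EuclideanSpace ℝ (Fin K)) (R : Measure (EuclideanSpace ℝ (Fin K)))
    (hP : IsProbabilityMeasure R) (hmom : (∫⁻ x, (‖x‖₊ : ℝ≥0∞) ∂ R) < ⊤)
    (hW : W1 R (empiricalMeasure n r) ≤ ENNReal.ofReal ε) :
    ∫ x, -(inner ℝ x w : ℝ) ∂ R
      ≤ (∫ x, -(inner ℝ x w : ℝ) ∂(empiricalMeasure n r)) + ε * ‖w‖ := by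
  set f : EuclideanSpace ℝ (Fin K) → ℝ := fun x => -(inner ℝ x w : ℝ) with hf
  have hcont : Continuous f := (continuous_id.inner (𝕜 := ℝ) continuous_const).neg
  set μ' := empiricalMeasure n r with hμ'
  have hfμ : Integrable f μ' := integrable_neg_inner w _ (empirical_moment hn r)
  have hfR : Integrable f R := integrable_neg_inner w _ hmom
  refine le_of_forall_pos_le_add fun η hη => ?_
  set δ := η / (‖w‖ + 1) with hδ
  have hδpos : 0 < δ := div_pos hη (by positivity)
  have h1 : W1 R μ' < ENNReal.ofReal (ε + δ) :=
    lt_of_le_of_lt hW ((ENNReal.ofReal_lt_ofReal_iff (by positivity)).mpr (by linarith))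
  rw [W1, iInf_lt_iff] at h1
  obtain ⟨π, h1⟩ := h1
  rw [iInf_lt_iff] at h1
  obtain ⟨hπ, hlt⟩ := h1
  have hfst : AEMeasurable (Prod.fst : _ × _ → EuclideanSpace ℝ (Fin K)) π :=
    measurable_fst.aemeasurable
  have hsnd : AEMeasurable (Prod.snd : _ × _ → EuclideanSpace ℝ (Fin K)) π :=
    measurable_snd.aemeasurable
  have hR1 : ∫ x, f x ∂ R = ∫ p, f p.1 ∂π := by
    rw [← hπ.1, integral_map hfst hcont.aestronglyMeasurable]
  have hR2 : ∫ x, f x ∂μ' = ∫ p, f p.2 ∂π := by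
    rw [← hπ.2, integral_map hsnd hcont.aestronglyMeasurable]
  have hint1 : Integrable (fun p => f p.1) π := by
    have := (integrable_map_measure hcont.aestronglyMeasurable hfst).mp (by rwa [hπ.1])
    exact this
  have hint2 : Integrable (fun p => f p.2) π := by
    have := (integrable_map_measure hcont.aestronglyMeasurable hsnd).mp (by rwa [hπ.2])
    exact this
  have hedist : ∀ p : EuclideanSpace ℝ (Fin K) × EuclideanSpace ℝ (Fin K),
      (‖dist p.1 p.2‖₊ : ℝ≥0∞) = edist p.1 p.2 := fun p => by
    rw [edist_dist, ← enorm_eq_nnnorm, ← ofReal_norm, Real.norm_eq_abs, abs_of_nonneg dist_nonneg]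
  have hdint : Integrable (fun p => dist p.1 p.2) π := by
    refine ⟨continuous_dist.aestronglyMeasurable, ?_⟩
    rw [HasFiniteIntegral]
    simp only [enorm_eq_nnnorm, hedist]
    exact hlt.trans_le le_top
  have hdist_le : ∫ p, dist p.1 p.2 ∂π ≤ ε + δ := by
    rw [integral_eq_lintegral_of_nonneg_ae (Filter.Eventually.of_forall fun p => dist_nonneg)
      hdint.1]
    apply ENNReal.toReal_le_of_le_ofReal (by positivity)
    simp_rw [edist_dist] at hlt
    exact hlt.le
  have key : ∫ p, f p.1 ∂π ≤ ∫ p, (f p.2 + ‖w‖ * dist p.1 p.2) ∂π := by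
    refine integral_mono hint1 (hint2.add (hdint.const_mul _)) fun p => ?_
    have h2 := real_inner_le_norm (p.2 - p.1) w
    rw [inner_sub_left] at h2
    have h3 : ‖p.2 - p.1‖ = dist p.1 p.2 := by rw [norm_sub_rev, dist_eq_norm]
    rw [h3] at h2
    simp only [hf]
    have h4 : dist p.1 p.2 * ‖w‖ = ‖w‖ * dist p.1 p.2 := mul_comm _ _
    linarith
  rw [integral_add hint2 (hdint.const_mul _), integral_const_mul] at key
  have h5 : ‖w‖ * δ ≤ η := by
    have hpos : (0:ℝ) < ‖w‖ + 1 := by positivity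
    rw [hδ, ← mul_div_assoc, div_le_iff₀ hpos]
    nlinarith [norm_nonneg w]
  have h6 : ‖w‖ * ∫ p, dist p.1 p.2 ∂π ≤ ‖w‖ * (ε + δ) :=
    mul_le_mul_of_nonneg_left hdist_le (norm_nonneg w)
  rw [hR1]
  nlinarith [norm_nonneg w]

lemma attain (hn : 1 ≤ n) (r : Fin n → EuclideanSpace ℝ (Fin K)) (ε : ℝ) (hε : 0 ≤ ε)
    (w : EuclideanSpace ℝ (Fin K)) :
    ∃ R : Measure (EuclideanSpace ℝ (Fin K)), IsProbabilityMeasure R ∧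
      (∫⁻ x, (‖x‖₊ : ℝ≥0∞) ∂ R) < ⊤ ∧
      W1 R (empiricalMeasure n r) ≤ ENNReal.ofReal ε ∧
      (∫ x, -(inner ℝ x w : ℝ) ∂ R)
        = (∫ x, -(inner ℝ x w : ℝ) ∂(empiricalMeasure n r)) + ε * ‖w‖ := by
  set f : EuclideanSpace ℝ (Fin K) → ℝ := fun x => -(inner ℝ x w : ℝ) with hf
  have hcont : Continuous f := (continuous_id.inner (𝕜 := ℝ) continuous_const).neg
  set μ' := empiricalMeasure n r with hμ'
  haveI : IsProbabilityMeasure μ' := empirical_prob hn r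
  obtain ⟨v, hv1, hv2⟩ : ∃ v : EuclideanSpace ℝ (Fin K),
      ‖v‖ ≤ ε ∧ (inner ℝ v w : ℝ) = ε * ‖w‖ := by
    rcases eq_or_ne w 0 with hw | hw
    · exact ⟨0, by simpa, by simp [hw]⟩
    · refine ⟨(ε / ‖w‖) • w, ?_, ?_⟩
      · rw [norm_smul, Real.norm_eq_abs, abs_of_nonneg (by positivity),
          div_mul_cancel₀ _ (norm_ne_zero_iff.mpr hw)]
      · rw [real_inner_smul_left, real_inner_self_eq_norm_mul_norm]
        have hw0 : ‖w‖ ≠ 0 := norm_ne_zero_iff.mpr hw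
        field_simp
  have hmeas : Measurable (fun x : EuclideanSpace ℝ (Fin K) => x - v) :=
    (continuous_id.sub continuous_const).measurable
  set R := Measure.map (fun x => x - v) μ' with hR
  haveI : IsProbabilityMeasure R := Measure.isProbabilityMeasure_map hmeas.aemeasurable
  refine ⟨R, inferInstance, ?_, ?_, ?_⟩
  · rw [hR, lintegral_map (by fun_prop) hmeas,
      lintegral_empirical r (h := fun x => (‖x - v‖₊ : ℝ≥0∞)) (by fun_prop)]
    refine ENNReal.mul_lt_top ?_ ?_
    · exact ENNReal.inv_lt_top.mpr (by exact_mod_cast Nat.pos_of_ne_zero (by omega))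
    · exact ENNReal.sum_lt_top.mpr fun i _ => ENNReal.coe_lt_top
  · set π : Measure (EuclideanSpace ℝ (Fin K) × EuclideanSpace ℝ (Fin K)) :=
      Measure.map (fun x => (x - v, x)) μ' with hπdef
    have hgm : Measurable (fun x : EuclideanSpace ℝ (Fin K) => (x - v, x)) :=
      hmeas.prodMk measurable_id
    have hcoup : IsCoupling π R μ' := by
      constructor
      · rw [hπdef, Measure.map_map measurable_fst hgm, hR]
        rfl
      · rw [hπdef, Measure.map_map measurable_snd hgm]
        exact Measure.map_id
    calc W1 R μ' ≤ ∫⁻ p, edist p.1 p.2 ∂π := by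
          exact iInf_le_of_le π (iInf_le_of_le hcoup le_rfl)
      _ = ∫⁻ x, edist (x - v) x ∂μ' := lintegral_map (by fun_prop) hgm
      _ = ENNReal.ofReal ‖v‖ := by
          have : ∀ x : EuclideanSpace ℝ (Fin K), edist (x - v) x = ENNReal.ofReal ‖v‖ := by
            intro x
            rw [edist_dist, dist_eq_norm]
            congr 1
            simp
          simp only [this, lintegral_const, measure_univ, mul_one]
      _ ≤ ENNReal.ofReal ε := ENNReal.ofReal_le_ofReal hv1
  · have hfμ : Integrable f μ' := integrable_neg_inner w _ (empirical_moment hn r)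
    rw [hR, integral_map hmeas.aemeasurable hcont.aestronglyMeasurable]
    have hfx : ∀ x : EuclideanSpace ℝ (Fin K), f (x - v) = f x + (inner ℝ v w : ℝ) := by
      intro x
      simp only [hf, inner_sub_left]
      ring
    simp_rw [hfx]
    rw [integral_add hfμ (integrable_const _), integral_const, probReal_univ]
    simp [hv2]

theorem stmt_14 {K : ℕ} (hK : 1 ≤ K) (n : ℕ) (hn : 1 ≤ n)
    (r : Fin n → EuclideanSpace ℝ (Fin K)) (ε : ℝ) (hε : 0 ≤ ε)
    (w : EuclideanSpace ℝ (Fin K)) :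
    sSup {y : ℝ | ∃ R : Measure (EuclideanSpace ℝ (Fin K)),
        IsProbabilityMeasure R ∧ (∫⁻ x, (‖x‖₊ : ℝ≥0∞) ∂ R) < ⊤ ∧
        W1 R (empiricalMeasure n r) ≤ ENNReal.ofReal ε ∧
        y = ∫ x, -(inner ℝ x w : ℝ) ∂ R}
      = (∫ x, -(inner ℝ x w : ℝ) ∂(empiricalMeasure n r)) + ε * ‖w‖ := by
  obtain ⟨R₀, hR₀1, hR₀2, hR₀3, hR₀4⟩ := attain hn r ε hε w
  have hmem : (∫ x, -(inner ℝ x w : ℝ) ∂(empiricalMeasure n r)) + ε * ‖w‖ ∈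
      {y : ℝ | ∃ R : Measure (EuclideanSpace ℝ (Fin K)),
        IsProbabilityMeasure R ∧ (∫⁻ x, (‖x‖₊ : ℝ≥0∞) ∂ R) < ⊤ ∧
        W1 R (empiricalMeasure n r) ≤ ENNReal.ofReal ε ∧
        y = ∫ x, -(inner ℝ x w : ℝ) ∂ R} := ⟨R₀, hR₀1, hR₀2, hR₀3, hR₀4.symm⟩
  apply le_antisymm
  · refine csSup_le ⟨_, hmem⟩ ?_
    rintro y ⟨R, h1, h2, h3, rfl⟩
    exact upper_bound hn r ε hε w R h1 h2 h3
  · refine le_csSup ⟨(∫ x, -(inner ℝ x w : ℝ) ∂(empiricalMeasure n r)) + ε * ‖w‖, ?_⟩ hmem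
    rintro y ⟨R, h1, h2, h3, rfl⟩
    exact upper_bound hn r ε hε w R h1 h2 h3
end
end

section
/- Let d, K ≥ 1, let P be a Borel probability measure on ℝ^d with finite first moment and mean θ̂ := ∫ θ dP(θ), let θ ↦ R_θ be a measurable family of Borel probability measures on ℝ^K with finite first moments, and let N ⊆ ℝ^d be measurable with θ̂ ∈ N. Let G ≥ 0, let ω : [0,∞) → [0,∞) be nondecreasing with ω(0) = 0, and let Φ : ℝ^d → [0,∞) be measurable and P-integrable. Let f : ℝ^K → ℝ be 1-Lipschitz and set h_f(θ) := ∫ f dR_θ. Assume: (H1) there exists G_f ∈ ℝ^d with ‖G_f‖ ≤ G such that for all θ ∈ N, |h_f(θ) − h_f(θ̂) − ⟨G_f, θ − θ̂⟩| ≤ ω(‖θ − θ̂‖); (H3) |h_f(θ) − h_f(θ̂)| ≤ Φ(θ) for all θ. Assume also that ‖θ − θ̂‖ and ω(‖θ − θ̂‖) are P-integrable. Then ∫ h_f(θ) dP(θ) − h_f(θ̂) ≤ ∫ ω(‖θ − θ̂‖) dP(θ) + G · ∫_{Nᶜ} ‖θ − θ̂‖ dP(θ) + ∫_{Nᶜ}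 Φ(θ) dP(θ). -/
open MeasureTheory ENNReal

noncomputable section

theorem stmt_17 {d K : ℕ} (hd : 1 ≤ d) (hK : 1 ≤ K)
    (P : Measure (EuclideanSpace ℝ (Fin d))) [IsProbabilityMeasure P]
    (hPm : Integrable (fun θ => θ) P)
    (θhat : EuclideanSpace ℝ (Fin d)) (hθhat : θhat = ∫ θ, θ ∂P)
    (R : EuclideanSpace ℝ (Fin d) → Measure (EuclideanSpace ℝ (Fin K)))
    (hRmeas : Measurable R)
    (hRprob : ∀ θ, IsProbabilityMeasure (R θ))
    (hRmom : ∀ θ, ∫⁻ r, (‖r‖₊ : ℝ≥0∞) ∂(R θ) < ⊤)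
    (N : Set (EuclideanSpace ℝ (Fin d))) (hN : MeasurableSet N) (hθhatN : θhat ∈ N)
    (G : ℝ) (hG : 0 ≤ G)
    (ω : ℝ → ℝ) (hωmono : MonotoneOn ω (Set.Ici 0)) (hω0 : ω 0 = 0)
    (hωnonneg : ∀ t, 0 ≤ t → 0 ≤ ω t)
    (Φ : EuclideanSpace ℝ (Fin d) → ℝ) (hΦmeas : Measurable Φ)
    (hΦnonneg : ∀ θ, 0 ≤ Φ θ) (hΦint : Integrable Φ P)
    (f : EuclideanSpace ℝ (Fin K) → ℝ) (hf : LipschitzWith 1 f)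
    -- (H1): local linearization with bounded coefficient
    (Gf : EuclideanSpace ℝ (Fin d)) (hGf : ‖Gf‖ ≤ G)
    (hH1 : ∀ θ ∈ N,
      |(∫ x, f x ∂(R θ)) - (∫ x, f x ∂(R θhat)) - (inner ℝ Gf (θ - θhat) : ℝ)|
        ≤ ω ‖θ - θhat‖)
    -- (H3): integrable envelope
    (hH3 : ∀ θ, |(∫ x, f x ∂(R θ)) - ∫ x, f x ∂(R θhat)| ≤ Φ θ)
    -- integrability of the displayed quantities
    (hint1 : Integrable (fun θ => ‖θ - θhat‖) P)
    (hint2 : Integrable (fun θ => ω ‖θ - θhat‖) P) :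
    (∫ θ, (∫ x, f x ∂(R θ)) ∂P) - (∫ x, f x ∂(R θhat))
      ≤ (∫ θ, ω ‖θ - θhat‖ ∂P)
        + G * (∫ θ in Nᶜ, ‖θ - θhat‖ ∂P)
        + ∫ θ in Nᶜ, Φ θ ∂P := by
  classical
  set c : ℝ := ∫ x, f x ∂(R θhat) with hc
  -- measurability of θ ↦ ∫ f d(R θ) via kernel machinery
  let κ : ProbabilityTheory.Kernel (EuclideanSpace ℝ (Fin d)) (EuclideanSpace ℝ (Fin K)) :=
    ⟨R, hRmeas⟩
  haveI : ProbabilityTheory.IsMarkovKernel κ := ⟨fun θ => hRprob θ⟩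
  have hhm : StronglyMeasurable (fun θ => ∫ x, f x ∂(R θ)) := by
    have huncurry : StronglyMeasurable
        (Function.uncurry (fun (_ : EuclideanSpace ℝ (Fin d)) (x : EuclideanSpace ℝ (Fin K)) => f x)) :=
      (hf.continuous.stronglyMeasurable.comp_measurable measurable_snd)
    exact MeasureTheory.StronglyMeasurable.integral_kernel_prod_right (κ := κ) huncurry
  -- g θ := h θ - c is integrable, dominated by Φ
  set g : EuclideanSpace ℝ (Fin d) → ℝ := fun θ => (∫ x, f x ∂(R θ)) - c with hgdef
  have hgm : AEStronglyMeasurable g P :=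
    ((hhm.sub stronglyMeasurable_const).aestronglyMeasurable)
  have hgint : Integrable g P := by
    refine hΦint.mono' hgm (Filter.Eventually.of_forall fun θ => ?_)
    simpa [g, Real.norm_eq_abs, abs_of_nonneg (hΦnonneg θ)] using hH3 θ
  -- θ - θhat integrable, inner term integrable
  have hsubint : Integrable (fun θ => θ - θhat) P := hPm.sub (integrable_const θhat)
  have hinnerint : Integrable (fun θ => (inner ℝ Gf (θ - θhat) : ℝ)) P :=
    hsubint.const_inner Gf
  -- mean-zero property
  have hmean : ∫ θ, (θ - θhat) ∂P = 0 := by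
    rw [integral_sub hPm (integrable_const θhat), integral_const]
    simp [← hθhat]
  have hinnertot : ∫ θ, (inner ℝ Gf (θ - θhat) : ℝ) ∂P = 0 := by
    rw [integral_inner hsubint, hmean, inner_zero_right]
  -- split the integral
  have hsplit : ∫ θ, g θ ∂P = (∫ θ in N, g θ ∂P) + ∫ θ in Nᶜ, g θ ∂P :=
    (integral_add_compl hN hgint).symm
  -- bound on N
  have hboundN : ∫ θ in N, g θ ∂P
      ≤ (∫ θ in N, (inner ℝ Gf (θ - θhat) : ℝ) ∂P) + ∫ θ in N, ω ‖θ - θhat‖ ∂P := by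
    rw [← integral_add (hinnerint.integrableOn) (hint2.integrableOn)]
    refine setIntegral_mono_on hgint.integrableOn
      (hinnerint.add hint2).integrableOn hN fun θ hθ => ?_
    have := hH1 θ hθ
    have h1 : g θ - (inner ℝ Gf (θ - θhat) : ℝ) ≤ ω ‖θ - θhat‖ :=
      (le_abs_self _).trans this
    linarith
  -- inner integral on N
  have hinnerN : ∫ θ in N, (inner ℝ Gf (θ - θhat) : ℝ) ∂P
      = - ∫ θ in Nᶜ, (inner ℝ Gf (θ - θhat) : ℝ) ∂P := by
    have := integral_add_compl hN hinnerint
    rw [hinnertot] at this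
    linarith
  have hinnerNc : - ∫ θ in Nᶜ, (inner ℝ Gf (θ - θhat) : ℝ) ∂P
      ≤ G * ∫ θ in Nᶜ, ‖θ - θhat‖ ∂P := by
    rw [← integral_neg, ← integral_const_mul]
    refine setIntegral_mono_on hinnerint.neg.integrableOn
      ((hint1.const_mul G).integrableOn) hN.compl fun θ _ => ?_
    have h1 : (inner ℝ Gf (-(θ - θhat)) : ℝ) ≤ ‖Gf‖ * ‖-(θ - θhat)‖ :=
      real_inner_le_norm _ _
    rw [inner_neg_right, norm_neg] at h1
    have h2 : ‖Gf‖ * ‖θ - θhat‖ ≤ G * ‖θ - θhat‖ :=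
      mul_le_mul_of_nonneg_right hGf (norm_nonneg _)
    linarith
  -- ω integral on N ≤ total
  have hωN : ∫ θ in N, ω ‖θ - θhat‖ ∂P ≤ ∫ θ, ω ‖θ - θhat‖ ∂P :=
    setIntegral_le_integral hint2
      (Filter.Eventually.of_forall fun θ => hωnonneg _ (norm_nonneg _))
  -- bound on Nᶜ
  have hboundNc : ∫ θ in Nᶜ, g θ ∂P ≤ ∫ θ in Nᶜ, Φ θ ∂P := by
    refine setIntegral_mono_on hgint.integrableOn hΦint.integrableOn hN.compl fun θ _ => ?_
    exact (le_abs_self _).trans (hH3 θ)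
  -- assemble
  have hhint : Integrable (fun θ => ∫ x, f x ∂(R θ)) P := by
    have h := hgint.add (integrable_const c)
    refine h.congr (Filter.Eventually.of_forall fun θ => ?_)
    simp [g]
  have hgoal : (∫ θ, (∫ x, f x ∂(R θ)) ∂P) - c = ∫ θ, g θ ∂P := by
    rw [hgdef, integral_sub hhint (integrable_const c), integral_const]
    simp
  rw [hgoal, hsplit]
  linarith
end
end
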